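/- arXiv:1302.7227 — 9 statements merged into one kernel-verified Lean document; each statement's English description precedes it below -/
import Mathlib

section
/- Let N ≥ 1 be an integer and suppose f : ℕ → ℝ satisfies f(0) = 1, f(x) = s·p·f(x+1) + s·(1-p)·f(x-1) for all integers 1 ≤ x ≤ N-1, and f(N) = s·f(N-1). If D := χ^{2N-1}(χ - s) + ξ^{N-1}(sχ - ξ) ≠ 0, then f(1) = (ξ·χ^{2N-2}(χ - s) + ξ^{N-1}·χ·(sχ - ξ)) / D. -/
open Real

/-- The hitting-time generating function of a random walk on `{0,…,N}` with
up-probability `p`, reflected at `N`, evaluated at the starting point `1`,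
is given by the explicit formula in terms of `ξ = (1-p)/p` and the larger root
`χ` of `s p λ² - λ + s(1-p) = 0`. -/
theorem stmt_0 (s p : ℝ) (hs : 0 < s) (hs1 : s ≤ 1) (hp : 1/2 ≤ p) (hp1 : p < 1)
    (hdisc : 4 * s^2 * p * (1 - p) < 1)
    (ξ χ : ℝ) (hξ : ξ = (1 - p) / p)
    (hχ : χ = (1 + Real.sqrt (1 - 4 * s^2 * p * (1 - p))) / (2 * s * p))
    (N : ℕ) (hN : 1 ≤ N) (f : ℕ → ℝ)
    (h0 : f 0 = 1)
    (hrec : ∀ x : ℕ, 1 ≤ x → x ≤ N - 1 →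
      f x = s * p * f (x + 1) + s * (1 - p) * f (x - 1))
    (hend : f N = s * f (N - 1))
    (hD : χ ^ (2*N - 1) * (χ - s) + ξ ^ (N - 1) * (s * χ - ξ) ≠ 0) :
    f 1 = (ξ * χ ^ (2*N - 2) * (χ - s) + ξ ^ (N - 1) * χ * (s * χ - ξ)) /
      (χ ^ (2*N - 1) * (χ - s) + ξ ^ (N - 1) * (s * χ - ξ)) := by
  have hp0 : 0 < p := by linarith
  have hsp : 0 < s * p := mul_pos hs hp0
  obtain ⟨d, hd⟩ : ∃ d : ℝ, d = 1 - 4 * s^2 * p * (1 - p) := ⟨_, rfl⟩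
  rw [← hd] at hχ
  have hd0 : 0 < d := by rw [hd]; linarith
  have hsq : Real.sqrt d ^ 2 = d := Real.sq_sqrt hd0.le
  have hsq0 : 0 < Real.sqrt d := Real.sqrt_pos.2 hd0
  have hχpos : 0 < χ := by
    rw [hχ]; exact div_pos (by linarith) (by linarith)
  have hχ0 : χ ≠ 0 := ne_of_gt hχpos
  have hsp0 : s * p ≠ 0 := ne_of_gt hsp
  -- quadratic relation for χ
  have hquad : s * p * χ^2 = χ - s * (1 - p) := by
    rw [hχ]; field_simp
    linear_combination hsq + hd
  obtain ⟨χ', hχ'def⟩ : ∃ c : ℝ, c = ξ / χ := ⟨_, rfl⟩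
  have hmul : χ * χ' = ξ := by rw [hχ'def]; field_simp
  have hξp : ξ * p = 1 - p := by rw [hξ]; field_simp
  have h2 : s * p * ξ^2 = ξ * χ - s * (1 - p) * χ^2 := by
    linear_combination ξ * hquad + s * (ξ - χ^2) * hξp
  have hquad' : s * p * χ'^2 = χ' - s * (1 - p) := by
    rw [hχ'def]; field_simp
    linear_combination h2
  have hχ'val : χ' = (1 - Real.sqrt d) / (2 * s * p) := by
    rw [hχ'def, hξ, hχ]
    have h1 : (0:ℝ) < 1 + Real.sqrt d := by linarith
    field_simp
    linear_combination hsq + hd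
  have hcpos : 0 < χ - χ' := by
    rw [hχ'val, hχ, div_sub_div_same]
    exact div_pos (by linarith) (by linarith)
  have hc : χ - χ' ≠ 0 := ne_of_gt hcpos
  -- the candidate solution
  set g : ℕ → ℝ := fun x => ((f 1 - χ') * χ^x + (χ - f 1) * χ'^x) / (χ - χ') with hg
  have hg0 : g 0 = 1 := by simp only [hg, pow_zero]; field_simp; ring
  have hg1 : g 1 = f 1 := by simp only [hg, pow_one]; field_simp; ring
  have hgrec : ∀ x : ℕ, g (x+1) = s * p * g (x + 2) + s * (1 - p) * g x := by
    intro x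
    simp only [hg]
    field_simp
    linear_combination (-(f 1 - χ') * χ^x) * hquad + ((f 1 - χ) * χ'^x) * hquad'
  -- f = g on [0, N]
  have key : ∀ x, x ≤ N → f x = g x := by
    intro x
    induction x using Nat.strong_induction_on with
    | _ x ih =>
      match x with
      | 0 => intro _; rw [h0, hg0]
      | 1 => intro _; rw [hg1]
      | (x+2) =>
        intro hx
        have hfx : f (x+1) = s * p * f (x+2) + s * (1-p) * f x := by
          have := hrec (x+1) (by omega) (by omega)
          simpa using this
        have h1 : f (x+1) = g (x+1) := ih (x+1) (by omega) (by omega)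
        have h2 : f x = g x := ih x (by omega) (by omega)
        have h3 := hgrec x
        have : s * p * f (x+2) = s * p * g (x+2) := by
          rw [h1, h2, h3] at hfx; linarith
        exact mul_left_cancel₀ hsp0 this
  obtain ⟨m, rfl⟩ : ∃ m, N = m + 1 := ⟨N - 1, by omega⟩
  -- boundary condition at N
  have hE : (f 1 - χ') * χ^m * (χ - s) + (χ - f 1) * χ'^m * (χ' - s) = 0 := by
    have hfN := key (m+1) le_rfl
    have hfm := key m (by omega)
    rw [hfN, show m + 1 - 1 = m from rfl, hfm] at hend
    simp only [hg] at hend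
    field_simp at hend
    linear_combination hend
  have hab : χ^m * χ'^m = ξ^m := by rw [← mul_pow, hmul]
  -- simplify exponents
  have e1 : 2*(m+1) - 1 = 2*m + 1 := by omega
  have e2 : 2*(m+1) - 2 = 2*m := by omega
  have e3 : m + 1 - 1 = m := by omega
  simp only [e1, e2, e3] at hD ⊢
  rw [eq_div_iff hD]
  linear_combination (χ * χ^m) * hE + (χ^m * χ^m * (χ - s) + (f 1 - χ) * χ^m * χ'^m) * hmul + ((χ - f 1) * (s*χ - ξ)) * hab
end

section
/- Fix β > 0. For each integer N large enough that g_N := β·log(N)/N lies in (0,1), set r_N = (1 + g_N)/(1 - g_N) and M_N = (r_N^{N-1} - 1)/g_N + r_N^{N-1}. Then lim_{N→∞} M_N · β·log(N) / N^{1+2β} = 1. -/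
open Filter Real

lemma aux_L_bound {x : ℝ} (hx : 0 < x) (hx2 : x ≤ 1/2) :
    |Real.log (1+x) - Real.log (1-x) - 2*x| ≤ 2*x^2 := by
  have h1 : (0:ℝ) < 1 + x := by linarith
  have h2 : (0:ℝ) < 1 - x := by linarith
  have e1 : (1+x)*(1+x)⁻¹ = 1 := mul_inv_cancel₀ h1.ne'
  have e2 : (1-x)*(1-x)⁻¹ = 1 := mul_inv_cancel₀ h2.ne'
  have up1 : Real.log (1+x) ≤ x := by
    have := Real.log_le_sub_one_of_pos h1; linarith
  have up2 : -Real.log (1-x) ≤ x + 2*x^2 := by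
    have := Real.one_sub_inv_le_log_of_pos h2
    have hinv : (1-x)⁻¹ ≤ 1 + x + 2*x^2 := by nlinarith [inv_pos.2 h2]
    linarith
  have lo1 : x - x^2 ≤ Real.log (1+x) := by
    have := Real.one_sub_inv_le_log_of_pos h1
    have hinv : (1+x)⁻¹ ≤ 1 - x + x^2 := by nlinarith [inv_pos.2 h1]
    linarith
  have lo2 : x ≤ -Real.log (1-x) := by
    have := Real.log_le_sub_one_of_pos h2; linarith
  rw [abs_le]; constructor <;> nlinarith

/-- First-moment asymptotics `m(θ^N) ~ N^{1+2β}/(β log N)` for the mean hitting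
time of `0` of the drifted walk on `{0,…,N}` with drift `g_N = β log N / N`. -/
theorem stmt_3 (β : ℝ) (hβ : 0 < β) (g r M : ℕ → ℝ)
    (hg : ∀ N : ℕ, g N = β * Real.log N / N)
    (hr : ∀ N : ℕ, r N = (1 + g N) / (1 - g N))
    (hM : ∀ N : ℕ, M N = (r N ^ (N - 1) - 1) / g N + r N ^ (N - 1)) :
    Tendsto (fun N : ℕ => M N * (β * Real.log N) / (N : ℝ) ^ (1 + 2 * β))
      atTop (nhds 1) := by
  set L : ℕ → ℝ := fun N => Real.log (1 + g N) - Real.log (1 - g N) with hL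
  set f : ℕ → ℝ := fun N => ((N:ℝ) - 1) * L N - 2*β*Real.log N with hf
  -- g → 0
  have hg0 : Tendsto g atTop (nhds 0) := by
    have h1 := (Real.tendsto_pow_log_div_mul_add_atTop 1 0 1 one_ne_zero).comp
      tendsto_natCast_atTop_atTop
    have h2 := h1.const_mul β
    rw [mul_zero] at h2
    refine h2.congr fun N => ?_
    simp [hg N, Function.comp]
    ring
  -- eventual positivity and smallness of g
  have hgev : ∀ᶠ N : ℕ in atTop, 0 < g N ∧ g N ≤ 1/2 := by
    have h1 : ∀ᶠ N : ℕ in atTop, g N ≤ 1/2 :=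
      hg0.eventually (eventually_le_nhds (by norm_num))
    have h2 : ∀ᶠ N : ℕ in atTop, 0 < g N := by
      filter_upwards [eventually_ge_atTop 2] with N hN
      rw [hg N]
      have hN1 : (1:ℝ) < N := by exact_mod_cast Nat.lt_of_lt_of_le one_lt_two hN
      have := Real.log_pos hN1
      positivity
    filter_upwards [h1, h2] with N a b using ⟨b, a⟩
  -- L → 0
  have hLt : Tendsto L atTop (nhds 0) := by
    have c1 : Tendsto (fun x : ℝ => Real.log (1+x) - Real.log (1-x)) (nhds 0) (nhds 0) := by
      have : ContinuousAt (fun x : ℝ => Real.log (1+x) - Real.log (1-x)) 0 := by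
        apply ContinuousAt.sub
        · exact (Real.continuousAt_log (by norm_num)).comp (by fun_prop)
        · exact (Real.continuousAt_log (by norm_num)).comp (by fun_prop)
      simpa using this.tendsto
    exact c1.comp hg0
  -- h := N * (L - 2g) → 0
  have hht : Tendsto (fun N : ℕ => (N:ℝ) * (L N - 2 * g N)) atTop (nhds 0) := by
    apply squeeze_zero_norm' (a := fun N : ℕ => 2*β^2 * (Real.log N ^ 2 / (1 * N + 0)))
    · filter_upwards [hgev, eventually_ge_atTop 1] with N ⟨hp, hs⟩ hN1
      have hn0 : (0:ℝ) < N := by exact_mod_cast hN1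
      have hb := aux_L_bound hp hs
      have : |(N:ℝ) * (L N - 2 * g N)| = (N:ℝ) * |L N - 2 * g N| := by
        rw [abs_mul, abs_of_pos hn0]
      rw [Real.norm_eq_abs, this]
      have h2 : (N:ℝ) * |L N - 2 * g N| ≤ (N:ℝ) * (2 * g N ^ 2) := by
        apply mul_le_mul_of_nonneg_left _ hn0.le
        simpa [hL, mul_comm] using hb
      refine h2.trans (le_of_eq ?_)
      rw [hg N]
      field_simp
      ring
    · have h1 := (Real.tendsto_pow_log_div_mul_add_atTop 1 0 2 one_ne_zero).comp
        tendsto_natCast_atTop_atTop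
      have h2 := h1.const_mul (2*β^2)
      rw [mul_zero] at h2
      exact h2
  -- f → 0
  have hft : Tendsto f atTop (nhds 0) := by
    have : Tendsto (fun N : ℕ => (N:ℝ) * (L N - 2 * g N) - L N) atTop (nhds 0) := by
      simpa using hht.sub hLt
    refine this.congr' ?_
    filter_upwards [eventually_ge_atTop 1] with N hN1
    have hn0 : (N:ℝ) ≠ 0 := by positivity
    have : g N * N = β * Real.log N := by rw [hg N]; field_simp
    simp only [hf]
    nlinarith [this]
  -- F → 1
  have hF : Tendsto (fun N : ℕ => (1 + g N) * Real.exp (f N) - (N:ℝ) ^ (-(2*β)))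
      atTop (nhds 1) := by
    have h1 : Tendsto (fun N : ℕ => 1 + g N) atTop (nhds 1) := by
      simpa using hg0.const_add 1
    have h2 : Tendsto (fun N : ℕ => Real.exp (f N)) atTop (nhds 1) := by
      simpa [Function.comp_def] using (Real.continuous_exp.continuousAt (x := 0)).tendsto.comp hft
    have h3 : Tendsto (fun N : ℕ => (N:ℝ) ^ (-(2*β))) atTop (nhds 0) :=
      (tendsto_rpow_neg_atTop (by positivity)).comp tendsto_natCast_atTop_atTop
    simpa using (h1.mul h2).sub h3
  -- conclude by eventual equality
  refine hF.congr' ?_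
  filter_upwards [hgev, eventually_ge_atTop 2] with N ⟨hp, hs⟩ hN2
  have hn0 : (0:ℝ) < N := by
    have : (0:ℕ) < N := by omega
    exact_mod_cast this
  have h1g : (0:ℝ) < 1 + g N := by linarith
  have h2g : (0:ℝ) < 1 - g N := by linarith
  have hrpos : 0 < r N := by rw [hr N]; positivity
  have hcast : ((N - 1 : ℕ) : ℝ) = (N:ℝ) - 1 := by
    have : 1 ≤ N := by omega
    push_cast [Nat.cast_sub this]
    ring
  have hR : r N ^ (N-1) = Real.exp (((N:ℝ) - 1) * L N) := by
    have hrl : r N = Real.exp (L N) := by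
      rw [← Real.exp_log hrpos]
      congr 1
      rw [hr N, Real.log_div h1g.ne' h2g.ne']
    rw [hrl, ← Real.exp_nat_mul, ← hcast]
  have hblog : β * Real.log N = g N * N := by rw [hg N]; field_simp
  have hpow : (N:ℝ) ^ (1+2*β) = N * (N:ℝ)^(2*β) := by
    rw [Real.rpow_add hn0, Real.rpow_one]
  have hrp : Real.exp (f N) = Real.exp (((N:ℝ)-1) * L N) * ((N:ℝ)^(2*β))⁻¹ := by
    rw [Real.rpow_def_of_pos hn0, ← Real.exp_neg, ← Real.exp_add]
    congr 1
    simp only [hf]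
    ring
  have hrneg : (N:ℝ) ^ (-(2*β)) = ((N:ℝ)^(2*β))⁻¹ := Real.rpow_neg hn0.le _
  rw [hM N, hR, hblog, hpow, hrp, hrneg]
  have hpw0 : ((N:ℝ)^(2*β)) ≠ 0 := by positivity
  field_simp
  ring
end

section
/- For every y > 0, lim_{ε→0+} F(⌊y/√(2ε)⌋, ε) / √(2ε) = tanh(y). -/
open Filter Real

/-- `F N ε = 1 - E[e^{-ε τ^N}]`, where `τ^N` is the hitting time of `0` by a
simple symmetric random walk on `{0,…,N}` started at `1` and reflected at `N`;
here `s = e^{-ε}` and `χ = (1 + √(1-s²))/s`. -/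
noncomputable def combF (N : ℕ) (ε : ℝ) : ℝ :=
  let s : ℝ := Real.exp (-ε)
  let χ : ℝ := (1 + Real.sqrt (1 - s ^ 2)) / s
  ((χ - 1) * χ ^ (2*N - 2) * (χ - s) + (1 - χ) * (s * χ - 1)) /
    (χ ^ (2*N - 1) * (χ - s) + (s * χ - 1))

noncomputable def sE (ε : ℝ) : ℝ := Real.exp (-ε)
noncomputable def dE (ε : ℝ) : ℝ := Real.sqrt (1 - sE ε ^ 2)
noncomputable def cE (ε : ℝ) : ℝ := (1 + dE ε) / sE ε

lemma sE_pos (ε : ℝ) : 0 < sE ε := Real.exp_pos _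
lemma sE_lt_one {ε : ℝ} (hε : 0 < ε) : sE ε < 1 := by
  simpa [sE] using Real.exp_lt_one_iff.mpr (by linarith : -ε < 0)
lemma dE_pos {ε : ℝ} (hε : 0 < ε) : 0 < dE ε := by
  have h1 := sE_pos ε
  have h2 := sE_lt_one hε
  have : sE ε ^ 2 < 1 := by nlinarith
  exact Real.sqrt_pos.mpr (by linarith)
lemma dE_sq {ε : ℝ} (hε : 0 < ε) : dE ε ^ 2 = 1 - sE ε ^ 2 := by
  have h1 := sE_pos ε
  have h2 := sE_lt_one hε
  rw [dE, Real.sq_sqrt] ; nlinarith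
lemma s_mul_c {ε : ℝ} (hε : 0 < ε) : sE ε * cE ε = 1 + dE ε := by
  rw [cE]; field_simp [(sE_pos ε).ne']
lemma c_sub_s {ε : ℝ} (hε : 0 < ε) : cE ε - sE ε = dE ε * cE ε := by
  have h1 := (sE_pos ε).ne'
  have h2 := dE_sq hε
  rw [cE]; field_simp; nlinarith
lemma cE_gt_one {ε : ℝ} (hε : 0 < ε) : 1 < cE ε := by
  rw [cE]
  rw [lt_div_iff₀ (sE_pos ε)]
  have := dE_pos hε
  have := sE_lt_one hε
  linarith

lemma combF_eq {N : ℕ} (hN : 1 ≤ N) {ε : ℝ} (hε : 0 < ε) :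
    combF N ε = (cE ε - 1) * ((cE ε) ^ (2*N - 1) - 1) / ((cE ε) ^ (2*N) + 1) := by
  obtain ⟨M, rfl⟩ : ∃ M, N = M + 1 := ⟨N - 1, by omega⟩
  have e1 : 2 * (M + 1) - 2 = 2 * M := by omega
  have e2 : 2 * (M + 1) - 1 = 2 * M + 1 := by omega
  have e3 : 2 * (M + 1) = 2 * M + 2 := by omega
  rw [combF]
  rw [e1, e2, e3]
  show ((cE ε - 1) * cE ε ^ (2*M) * (cE ε - sE ε) + (1 - cE ε) * (sE ε * cE ε - 1)) /
      (cE ε ^ (2*M+1) * (cE ε - sE ε) + (sE ε * cE ε - 1)) = _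
  rw [c_sub_s hε, s_mul_c hε]
  have hδ := (dE_pos hε).ne'
  have hnum : (cE ε - 1) * cE ε ^ (2*M) * (dE ε * cE ε) + (1 - cE ε) * (1 + dE ε - 1)
      = dE ε * ((cE ε - 1) * (cE ε ^ (2*M+1) - 1)) := by ring
  have hden : cE ε ^ (2*M+1) * (dE ε * cE ε) + (1 + dE ε - 1)
      = dE ε * (cE ε ^ (2*M+2) + 1) := by ring
  rw [hnum, hden, mul_div_mul_left _ _ hδ]

lemma tendsto_sqrt2e : Tendsto (fun ε : ℝ => Real.sqrt (2*ε)) (nhdsWithin 0 (Set.Ioi 0)) (nhdsWithin 0 (Set.Ioi 0)) := by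
  rw [tendsto_nhdsWithin_iff]
  constructor
  · have : Tendsto (fun ε : ℝ => Real.sqrt (2*ε)) (nhds 0) (nhds (Real.sqrt (2*0))) :=
      (Real.continuous_sqrt.comp (continuous_const.mul continuous_id)).tendsto 0
    simpa using this.mono_left nhdsWithin_le_nhds
  · filter_upwards [self_mem_nhdsWithin] with ε hε
    exact Real.sqrt_pos.mpr (by linarith [Set.mem_Ioi.mp hε])

lemma hA : Tendsto (fun x : ℝ => (1 - Real.exp (-x))/x) (nhdsWithin 0 {(0:ℝ)}ᶜ) (nhds 1) := by
  have h : HasDerivAt (fun x : ℝ => 1 - Real.exp (-x)) 1 0 := by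
    have h1 : HasDerivAt (fun x : ℝ => Real.exp (-x)) (-1) 0 := by
      have := (Real.hasDerivAt_exp (-0)).comp 0 (hasDerivAt_neg 0)
      exact this.congr_deriv (by simp)
    exact ((hasDerivAt_const (0:ℝ) (1:ℝ)).sub h1).congr_deriv (by norm_num)
  have := hasDerivAt_iff_tendsto_slope.mp h
  refine this.congr (fun x => ?_)
  simp [slope_fun_def, div_eq_inv_mul]

lemma hB : Tendsto (fun ε : ℝ => (1 - sE ε ^ 2)/(2*ε)) (nhdsWithin 0 (Set.Ioi 0)) (nhds 1) := by
  have h2 : Tendsto (fun ε : ℝ => 2*ε) (nhdsWithin 0 (Set.Ioi 0)) (nhdsWithin 0 {(0:ℝ)}ᶜ) := by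
    rw [tendsto_nhdsWithin_iff]
    constructor
    · simpa using ((continuous_mul_left (2:ℝ)).tendsto (0:ℝ)).mono_left
        (nhdsWithin_le_nhds (s := Set.Ioi (0:ℝ)))
    · filter_upwards [self_mem_nhdsWithin] with ε hε
      have := Set.mem_Ioi.mp hε; simp; linarith
  have := hA.comp h2
  refine this.congr (fun ε => ?_)
  simp only [Function.comp, sE]
  rw [← Real.exp_nat_mul]
  norm_num

lemma hDelta : Tendsto (fun ε : ℝ => dE ε / Real.sqrt (2*ε)) (nhdsWithin 0 (Set.Ioi 0)) (nhds 1) := by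
  have hsq : Tendsto (fun ε : ℝ => Real.sqrt ((1 - sE ε ^ 2)/(2*ε))) (nhdsWithin 0 (Set.Ioi 0)) (nhds 1) := by
    have := (Real.continuous_sqrt.tendsto 1).comp hB
    simpa [Function.comp_def] using this
  refine hsq.congr' ?_
  filter_upwards [self_mem_nhdsWithin] with ε hε
  have hε' := Set.mem_Ioi.mp hε
  have h1 : 0 ≤ 1 - sE ε ^ 2 := by
    have := sE_lt_one hε'
    have := sE_pos ε
    nlinarith
  rw [Real.sqrt_div h1, dE]

lemma hEps : Tendsto (fun ε : ℝ => ε / Real.sqrt (2*ε)) (nhdsWithin 0 (Set.Ioi 0)) (nhds 0) := by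
  have hsq : Tendsto (fun ε : ℝ => Real.sqrt (ε/2)) (nhdsWithin 0 (Set.Ioi 0)) (nhds 0) := by
    have := ((Real.continuous_sqrt.comp (continuous_id.div_const 2)).tendsto 0).mono_left
      (nhdsWithin_le_nhds (s := Set.Ioi (0:ℝ)))
    simpa only [Function.comp_def, id, zero_div, Real.sqrt_zero] using this
  refine hsq.congr' ?_
  filter_upwards [self_mem_nhdsWithin] with ε hε
  have hε' := Set.mem_Ioi.mp hε
  have ht : 0 < Real.sqrt (2*ε) := Real.sqrt_pos.mpr (by linarith)
  rw [eq_div_iff ht.ne', ← Real.sqrt_mul (by linarith : (0:ℝ) ≤ ε/2)]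
  rw [show ε/2*(2*ε) = ε^2 by ring, Real.sqrt_sq hε'.le]

lemma hSmall : Tendsto (fun ε : ℝ => (1 - sE ε) / Real.sqrt (2*ε)) (nhdsWithin 0 (Set.Ioi 0)) (nhds 0) := by
  have hq : Tendsto (fun ε : ℝ => (1 - Real.exp (-ε))/ε) (nhdsWithin 0 (Set.Ioi 0)) (nhds 1) :=
    hA.mono_left (nhdsWithin_mono 0 (fun x hx => ne_of_gt (Set.mem_Ioi.mp hx)))
  have := hq.mul hEps
  rw [mul_zero] at this
  refine this.congr' ?_
  filter_upwards [self_mem_nhdsWithin] with ε hε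
  have hε' := Set.mem_Ioi.mp hε
  rw [sE]
  field_simp

lemma hRatio : Tendsto (fun ε : ℝ => (cE ε - 1) / Real.sqrt (2*ε)) (nhdsWithin 0 (Set.Ioi 0)) (nhds 1) := by
  have hs : Tendsto (fun ε : ℝ => 1 / sE ε) (nhdsWithin 0 (Set.Ioi 0)) (nhds 1) := by
    have : Tendsto (fun ε : ℝ => 1 / Real.exp (-ε)) (nhds 0) (nhds (1 / Real.exp (-0))) :=
      (continuous_const.div (Real.continuous_exp.comp continuous_neg) (fun x => (Real.exp_pos _).ne')).tendsto 0
    simpa [sE] using this.mono_left (nhdsWithin_le_nhds (s := Set.Ioi (0:ℝ)))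
  have := (hSmall.add hDelta).mul hs
  rw [zero_add, one_mul] at this
  refine this.congr' ?_
  filter_upwards [self_mem_nhdsWithin] with ε hε
  have hε' := Set.mem_Ioi.mp hε
  have ht : 0 < Real.sqrt (2*ε) := Real.sqrt_pos.mpr (by linarith)
  have hs0 := (sE_pos ε).ne'
  rw [cE]
  field_simp
  ring

lemma tendsto_cE : Tendsto cE (nhdsWithin 0 (Set.Ioi 0)) (nhds 1) := by
  have : Tendsto (fun ε : ℝ => (1 + Real.sqrt (1 - Real.exp (-ε) ^ 2)) / Real.exp (-ε)) (nhds 0)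
      (nhds ((1 + Real.sqrt (1 - Real.exp (-0) ^ 2)) / Real.exp (-0))) := by
    refine ContinuousAt.tendsto ?_
    exact (continuousAt_const.add ((Real.continuous_sqrt.comp
      (continuous_const.sub ((Real.continuous_exp.comp continuous_neg).pow 2))).continuousAt)).div
      ((Real.continuous_exp.comp continuous_neg).continuousAt) (by simp [(Real.exp_pos _).ne'])
  have h := this.mono_left (nhdsWithin_le_nhds (s := Set.Ioi (0:ℝ)))
  simp at h
  exact h

lemma hNt (y : ℝ) (hy : 0 < y) :
    Tendsto (fun ε : ℝ => (⌊y / Real.sqrt (2*ε)⌋₊ : ℝ) * Real.sqrt (2*ε))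
      (nhdsWithin 0 (Set.Ioi 0)) (nhds y) := by
  have hlow : Tendsto (fun ε : ℝ => y - Real.sqrt (2*ε)) (nhdsWithin 0 (Set.Ioi 0)) (nhds y) := by
    have := (tendsto_const_nhds (x := y) (f := nhdsWithin (0:ℝ) (Set.Ioi 0))).sub
      (tendsto_sqrt2e.mono_right nhdsWithin_le_nhds)
    simpa using this
  refine tendsto_of_tendsto_of_tendsto_of_le_of_le' hlow tendsto_const_nhds ?_ ?_
  · filter_upwards [self_mem_nhdsWithin] with ε hε
    have hε' := Set.mem_Ioi.mp hε
    have ht : 0 < Real.sqrt (2*ε) := Real.sqrt_pos.mpr (by linarith)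
    have h1 : y / Real.sqrt (2*ε) - 1 < (⌊y / Real.sqrt (2*ε)⌋₊ : ℝ) := Nat.sub_one_lt_floor _
    nlinarith [(div_le_iff₀ ht).mp (le_refl (y / Real.sqrt (2*ε)))]
  · filter_upwards [self_mem_nhdsWithin] with ε hε
    have hε' := Set.mem_Ioi.mp hε
    have ht : 0 < Real.sqrt (2*ε) := Real.sqrt_pos.mpr (by linarith)
    have h1 : (⌊y / Real.sqrt (2*ε)⌋₊ : ℝ) ≤ y / Real.sqrt (2*ε) :=
      Nat.floor_le (by positivity)
    calc (⌊y / Real.sqrt (2*ε)⌋₊ : ℝ) * Real.sqrt (2*ε) ≤ (y / Real.sqrt (2*ε)) * Real.sqrt (2*ε) := by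
          exact mul_le_mul_of_nonneg_right h1 ht.le
      _ = y := by field_simp

lemma hLog : Tendsto (fun ε : ℝ => Real.log (cE ε) / (cE ε - 1)) (nhdsWithin 0 (Set.Ioi 0)) (nhds 1) := by
  have h : HasDerivAt Real.log 1 1 := by
    simpa using Real.hasDerivAt_log one_ne_zero
  have hslope := hasDerivAt_iff_tendsto_slope.mp h
  have hc : Tendsto cE (nhdsWithin 0 (Set.Ioi 0)) (nhdsWithin 1 {(1:ℝ)}ᶜ) := by
    rw [tendsto_nhdsWithin_iff]
    refine ⟨tendsto_cE, ?_⟩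
    filter_upwards [self_mem_nhdsWithin] with ε hε
    exact ne_of_gt (cE_gt_one (Set.mem_Ioi.mp hε))
  have := hslope.comp hc
  refine this.congr (fun ε => ?_)
  simp [slope_fun_def, Function.comp, div_eq_inv_mul]

lemma hPow (y : ℝ) (hy : 0 < y) :
    Tendsto (fun ε : ℝ => cE ε ^ (2 * ⌊y / Real.sqrt (2*ε)⌋₊))
      (nhdsWithin 0 (Set.Ioi 0)) (nhds (Real.exp (2*y))) := by
  have harg : Tendsto (fun ε : ℝ => ((2 * ⌊y / Real.sqrt (2*ε)⌋₊ : ℕ) : ℝ) * Real.log (cE ε))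
      (nhdsWithin 0 (Set.Ioi 0)) (nhds (2*y)) := by
    have h2 : Tendsto (fun ε : ℝ =>
        (2 * ((⌊y / Real.sqrt (2*ε)⌋₊ : ℝ) * Real.sqrt (2*ε))) *
        ((Real.log (cE ε) / (cE ε - 1)) * ((cE ε - 1) / Real.sqrt (2*ε))))
        (nhdsWithin 0 (Set.Ioi 0)) (nhds ((2*y) * (1*1))) :=
      ((tendsto_const_nhds.mul (hNt y hy)).mul (hLog.mul hRatio)).congr (fun _ => rfl)
    rw [show (2*y) * (1*1) = 2*y by ring] at h2
    refine h2.congr' ?_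
    filter_upwards [self_mem_nhdsWithin] with ε hε
    have hε' := Set.mem_Ioi.mp hε
    have ht : Real.sqrt (2*ε) ≠ 0 := (Real.sqrt_pos.mpr (by linarith)).ne'
    have hc1 : cE ε - 1 ≠ 0 := sub_ne_zero.mpr (cE_gt_one hε').ne'
    push_cast
    field_simp
  have := (Real.continuous_exp.tendsto _).comp harg
  refine this.congr' ?_
  filter_upwards [self_mem_nhdsWithin] with ε hε
  have hε' := Set.mem_Ioi.mp hε
  have hc : 0 < cE ε := lt_trans one_pos (cE_gt_one hε')
  simp only [Function.comp]
  rw [Real.exp_nat_mul, Real.exp_log hc]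

lemma evN1 (y : ℝ) (hy : 0 < y) :
    ∀ᶠ ε in nhdsWithin (0:ℝ) (Set.Ioi 0), 1 ≤ ⌊y / Real.sqrt (2*ε)⌋₊ := by
  have h1 : ∀ᶠ ε in nhdsWithin (0:ℝ) (Set.Ioi 0), Real.sqrt (2*ε) < y :=
    (tendsto_sqrt2e.mono_right nhdsWithin_le_nhds).eventually (eventually_lt_nhds hy)
  filter_upwards [h1, self_mem_nhdsWithin] with ε h hε
  have hε' := Set.mem_Ioi.mp hε
  have ht : 0 < Real.sqrt (2*ε) := Real.sqrt_pos.mpr (by linarith)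
  exact Nat.le_floor (by rw [Nat.cast_one, le_div_iff₀ ht]; linarith)

lemma hPow1 (y : ℝ) (hy : 0 < y) :
    Tendsto (fun ε : ℝ => cE ε ^ (2 * ⌊y / Real.sqrt (2*ε)⌋₊ - 1))
      (nhdsWithin 0 (Set.Ioi 0)) (nhds (Real.exp (2*y))) := by
  have hd := (hPow y hy).div tendsto_cE one_ne_zero
  rw [div_one] at hd
  refine hd.congr' ?_
  filter_upwards [evN1 y hy, self_mem_nhdsWithin] with ε hN hε
  have hε' := Set.mem_Ioi.mp hε
  have hc : cE ε ≠ 0 := (lt_trans one_pos (cE_gt_one hε')).ne'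
  rw [pow_sub₀ _ hc (by omega : 1 ≤ 2 * ⌊y / Real.sqrt (2*ε)⌋₊), pow_one]
  simp [Pi.div_apply, div_eq_mul_inv]

lemma tanh_id (y : ℝ) : (Real.exp (2*y) - 1)/(Real.exp (2*y) + 1) = Real.tanh y := by
  rw [Real.tanh_eq_sinh_div_cosh, Real.sinh_eq, Real.cosh_eq,
    show (2:ℝ)*y = y + y by ring, Real.exp_add, Real.exp_neg]
  have h := (Real.exp_pos y).ne'
  have h2 : Real.exp y * Real.exp y + 1 ≠ 0 := by positivity
  field_simp

/-- For every `y > 0`, `F(⌊y/√(2ε)⌋, ε)/√(2ε) → tanh y` as `ε → 0⁺`. -/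
theorem stmt_4 (y : ℝ) (hy : 0 < y) :
    Tendsto (fun ε : ℝ => combF ⌊y / Real.sqrt (2 * ε)⌋₊ ε / Real.sqrt (2 * ε))
      (nhdsWithin 0 (Set.Ioi 0)) (nhds (Real.tanh y)) := by
  have hexp : (0:ℝ) < Real.exp (2*y) + 1 := by positivity
  have hmain : Tendsto (fun ε : ℝ =>
      ((cE ε - 1) / Real.sqrt (2*ε)) *
      ((cE ε ^ (2 * ⌊y / Real.sqrt (2*ε)⌋₊ - 1) - 1) / (cE ε ^ (2 * ⌊y / Real.sqrt (2*ε)⌋₊) + 1)))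
      (nhdsWithin 0 (Set.Ioi 0))
      (nhds (1 * ((Real.exp (2*y) - 1)/(Real.exp (2*y) + 1)))) :=
    hRatio.mul (((hPow1 y hy).sub tendsto_const_nhds).div
      ((hPow y hy).add tendsto_const_nhds) hexp.ne')
  rw [one_mul, tanh_id] at hmain
  refine hmain.congr' ?_
  filter_upwards [evN1 y hy, self_mem_nhdsWithin] with ε hN hε
  have hε' := Set.mem_Ioi.mp hε
  rw [combF_eq hN hε']
  ring
end

section
/- There exists a constant c > 0 such that for every integer N ≥ 1 and every ε ∈ (0, 1/2), F(N,ε) ≤ c · min(1, e^{N√(2ε)} - 1). -/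
open Filter Real

/-- There is `c > 0` with `F(N,ε) ≤ c·min(1, e^{N√(2ε)} - 1)` for all `N ≥ 1`
and `ε ∈ (0, 1/2)`. -/
theorem stmt_5 :
    ∃ c : ℝ, 0 < c ∧ ∀ N : ℕ, 1 ≤ N → ∀ ε : ℝ, 0 < ε → ε < 1/2 →
      combF N ε ≤ c * min 1 (Real.exp (N * Real.sqrt (2 * ε)) - 1) := by
  refine ⟨3, by norm_num, ?_⟩
  intro N hN ε hε hε2
  obtain ⟨M, rfl⟩ : ∃ M, N = M + 1 := ⟨N - 1, by omega⟩
  set s := Real.exp (-ε) with hs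
  set r := Real.sqrt (1 - s ^ 2) with hrdef
  have hs0 : 0 < s := Real.exp_pos _
  have hs1 : s < 1 := by
    rw [hs, show (1:ℝ) = Real.exp 0 from (Real.exp_zero).symm]
    exact Real.exp_lt_exp.mpr (by linarith)
  have hsq : 0 ≤ 1 - s ^ 2 := by nlinarith
  have hr2 : r ^ 2 = 1 - s ^ 2 := Real.sq_sqrt hsq
  have hr0 : 0 < r := Real.sqrt_pos.mpr (by nlinarith)
  set χ := (1 + r) / s with hχdef
  have hsχ : s * χ = 1 + r := by
    rw [hχdef]; field_simp
  have hχ1 : 1 < χ := by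
    rw [hχdef, lt_div_iff₀ hs0]; linarith
  have hχ0 : 0 < χ := lt_trans one_pos hχ1
  have hχs : χ - s = r * χ := by
    have h : s * (χ - s) = s * (r * χ) := by
      have h2 : s * (r * χ) = r * (s * χ) := by ring
      rw [h2, hsχ, mul_sub, hsχ]
      nlinarith [hr2]
    exact mul_left_cancel₀ (ne_of_gt hs0) h
  have hr1 : s * χ - 1 = r := by rw [hsχ]; ring
  have hF : combF (M+1) ε =
      (r * ((χ - 1) * (χ ^ (2*M+1) - 1))) / (r * (χ ^ (2*M+2) + 1)) := by
    show ((χ - 1) * χ ^ (2*(M+1) - 2) * (χ - s) + (1 - χ) * (s * χ - 1)) /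
      (χ ^ (2*(M+1) - 1) * (χ - s) + (s * χ - 1)) = _
    rw [show 2*(M+1) - 2 = 2*M from by omega, show 2*(M+1) - 1 = 2*M+1 from by omega,
      hχs, hr1]
    congr 1 <;> ring
  have hd0 : (0:ℝ) < r * (χ ^ (2*M+2) + 1) := by positivity
  have hle : combF (M+1) ε ≤ χ - 1 := by
    rw [hF, div_le_iff₀ hd0]
    have hp : χ ^ (2*M+1) ≤ χ ^ (2*M+2) := pow_le_pow_right₀ hχ1.le (by omega)
    nlinarith [mul_nonneg (mul_nonneg hr0.le (sub_nonneg.mpr hχ1.le))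
      (by linarith : (0:ℝ) ≤ χ ^ (2*M+2) + 2 - χ ^ (2*M+1))]
  set q := Real.sqrt (2 * ε) with hqdef
  have hq2 : q ^ 2 = 2 * ε := Real.sq_sqrt (by linarith)
  have hq0 : 0 < q := Real.sqrt_pos.mpr (by linarith)
  have hq1 : q < 1 := by nlinarith
  have hs2 : s ^ 2 = Real.exp (-(2*ε)) := by
    rw [hs, ← Real.exp_nat_mul]; norm_num
  have hrq : r ≤ q := by
    rw [hrdef, hqdef]
    apply Real.sqrt_le_sqrt
    have := Real.add_one_le_exp (-(2*ε))
    rw [hs2]; linarith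
  have hexp : Real.exp ε ≤ 1 + 2*ε := by
    have h1 : 1 - ε ≤ s := by have := Real.add_one_le_exp (-ε); rw [hs]; linarith
    have h2 : Real.exp ε * s = 1 := by rw [hs, ← Real.exp_add]; simp
    nlinarith [Real.exp_pos ε]
  have hχe : χ = Real.exp ε * (1 + r) := by
    have hes : Real.exp ε * s = 1 := by rw [hs, ← Real.exp_add]; simp
    rw [hχdef, div_eq_iff (ne_of_gt hs0)]
    linear_combination (-(1 + r)) * hes
  have hχ3 : χ - 1 ≤ 3 * q := by
    have : χ ≤ (1 + 2*ε) * (1 + q) := by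
      rw [hχe]
      apply mul_le_mul hexp (by linarith) (by linarith) (by linarith)
    nlinarith
  have hn1 : (1:ℝ) ≤ ((M+1 : ℕ) : ℝ) := by exact_mod_cast Nat.one_le_iff_ne_zero.mpr (by omega)
  have ha : q ≤ Real.exp (((M+1 : ℕ) : ℝ) * q) - 1 := by
    have h1 : q ≤ ((M+1 : ℕ) : ℝ) * q := le_mul_of_one_le_left hq0.le hn1
    have h2 := Real.add_one_le_exp (((M+1 : ℕ) : ℝ) * q)
    linarith
  have hmin : q ≤ min 1 (Real.exp (((M+1 : ℕ) : ℝ) * q) - 1) := le_min hq1.le ha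
  calc combF (M+1) ε ≤ χ - 1 := hle
    _ ≤ 3 * q := hχ3
    _ ≤ 3 * min 1 (Real.exp (((M+1 : ℕ) : ℝ) * q) - 1) := by linarith [hmin]
end

section
/- For every integer N ≥ 1, the quantity D := χ^{2N-1}(χ - s) + ξ^{N-1}(sχ - ξ) is strictly positive, and the ratio G := (ξ·χ^{2N-2}(χ - s) + ξ^{N-1}·χ·(sχ - ξ)) / D satisfies ξ/χ ≤ G ≤ 1; consequently 1 - G ≤ χ - ξ. -/
open Real

/-- The denominator `D` of the hitting-time generating function is positive,
the generating function `G = E[s^{τ^N}]` satisfies `ξ/χ ≤ G ≤ 1`, and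
consequently `1 - G ≤ χ - ξ`. -/
theorem stmt_6 (s p : ℝ) (hs : 0 < s) (hs1 : s ≤ 1) (hp : 1/2 ≤ p) (hp1 : p < 1)
    (hdisc : 4 * s^2 * p * (1 - p) < 1)
    (ξ χ : ℝ) (hξ : ξ = (1 - p) / p)
    (hχ : χ = (1 + Real.sqrt (1 - 4 * s^2 * p * (1 - p))) / (2 * s * p))
    (N : ℕ) (hN : 1 ≤ N)
    (D G : ℝ)
    (hD : D = χ ^ (2*N - 1) * (χ - s) + ξ ^ (N - 1) * (s * χ - ξ))
    (hG : G = (ξ * χ ^ (2*N - 2) * (χ - s) + ξ ^ (N - 1) * χ * (s * χ - ξ)) / D) :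
    0 < D ∧ ξ / χ ≤ G ∧ G ≤ 1 ∧ 1 - G ≤ χ - ξ := by
  have hp0 : (0:ℝ) < p := by linarith
  have hq0 : (0:ℝ) < 1 - p := by linarith
  have hd : (0:ℝ) < 1 - 4 * s^2 * p * (1 - p) := by linarith
  set r := Real.sqrt (1 - 4 * s^2 * p * (1 - p)) with hr
  have hr0 : 0 < r := Real.sqrt_pos.mpr hd
  have hr2 : r ^ 2 = 1 - 4 * s^2 * p * (1 - p) := Real.sq_sqrt hd.le
  have hsp : (0:ℝ) < 2 * s * p := by positivity
  have hkey : 2 * s * p ≤ 1 + r := by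
    nlinarith [hr0.le, sq_nonneg (r + 2*s*p - 1),
      mul_nonneg (mul_nonneg hs.le hp0.le) (sub_nonneg.mpr hs1)]
  have hχ1 : 1 ≤ χ := by
    rw [hχ, le_div_iff₀ hsp]; linarith
  have hχ0 : 0 < χ := lt_of_lt_of_le one_pos hχ1
  have hξ0 : 0 < ξ := by rw [hξ]; positivity
  have hξ1 : ξ ≤ 1 := by rw [hξ, div_le_one hp0]; linarith
  have hsχξ : 0 < s * χ - ξ := by
    have h1 : s * χ - ξ = (2*p - 1 + r) / (2*p) := by
      rw [hχ, hξ]; field_simp; ring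
    rw [h1]
    apply div_pos (by linarith) (by linarith)
  have hχs : 0 ≤ χ - s := by linarith
  have hχξ2 : ξ ≤ χ^2 := by nlinarith
  obtain ⟨M, rfl⟩ : ∃ M, N = M + 1 := ⟨N - 1, by omega⟩
  have e1 : 2*(M+1) - 1 = 2*M + 1 := by omega
  have e2 : 2*(M+1) - 2 = 2*M := by omega
  have e3 : (M+1) - 1 = M := by omega
  rw [e1, e3] at hD
  rw [e2, e3] at hG
  have hξM : 0 < ξ ^ M := pow_pos hξ0 M
  have hχM : 0 < χ ^ (2*M) := pow_pos hχ0 _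
  have hD0 : 0 < D := by
    have h1 := mul_nonneg (pow_pos hχ0 (2*M+1)).le hχs
    have h2 := mul_pos hξM hsχξ
    rw [hD]; linarith
  have hpow : ξ ^ M ≤ χ ^ (2*M) := by
    calc ξ ^ M ≤ (χ^2) ^ M := pow_le_pow_left₀ hξ0.le hχξ2 M
    _ = χ ^ (2*M) := by rw [← pow_mul, Nat.mul_comm]
  have hG1 : ξ / χ ≤ G := by
    rw [hG, div_le_div_iff₀ hχ0 hD0]
    have key : (ξ * χ ^ (2*M) * (χ - s) + ξ ^ M * χ * (s * χ - ξ)) * χ - ξ * D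
        = ξ^M * (s*χ - ξ) * (χ^2 - ξ) := by rw [hD]; ring
    have h0 : 0 ≤ ξ^M * (s*χ - ξ) * (χ^2 - ξ) :=
      mul_nonneg (mul_nonneg hξM.le hsχξ.le) (sub_nonneg.mpr hχξ2)
    linarith
  have hG2 : G ≤ 1 := by
    rw [hG, div_le_one hD0]
    have hAB : (s*χ - ξ)*(χ - 1) ≤ (χ - s)*(χ - ξ) := by
      have hid : (χ-s)*(χ-ξ) - (s*χ-ξ)*(χ-1) = (1-s)*(χ^2-ξ) := by ring
      have h0 : 0 ≤ (1-s)*(χ^2-ξ) :=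
        mul_nonneg (by linarith) (sub_nonneg.mpr hχξ2)
      linarith
    have hB0 : 0 ≤ (s*χ - ξ)*(χ - 1) := mul_nonneg hsχξ.le (by linarith)
    have key : D - (ξ * χ ^ (2*M) * (χ - s) + ξ ^ M * χ * (s * χ - ξ))
        = χ^(2*M) * ((χ-s)*(χ-ξ)) - ξ^M * ((s*χ-ξ)*(χ-1)) := by rw [hD]; ring
    have h1 : ξ^M * ((s*χ-ξ)*(χ-1)) ≤ χ^(2*M) * ((s*χ-ξ)*(χ-1)) :=
      mul_le_mul_of_nonneg_right hpow hB0
    have h2 : χ^(2*M) * ((s*χ-ξ)*(χ-1)) ≤ χ^(2*M) * ((χ-s)*(χ-ξ)) :=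
      mul_le_mul_of_nonneg_left hAB hχM.le
    linarith
  refine ⟨hD0, hG1, hG2, ?_⟩
  have h3 : 1 - ξ/χ = (χ - ξ)/χ := by field_simp
  have h4 : (χ - ξ)/χ ≤ χ - ξ := div_le_self (by linarith) hχ1
  linarith
end

section
/- Let α > 0, β > 0 with α + β < 1, let c > 0, and let ν be a probability measure on ℝ supported in [1,∞) such that lim_{u→∞} u^α · ν({t : t > u}) = c. Then lim_{ε→0+} ε^{-(α+β)} ∫ t^{-β}(1 - e^{-ε t}) dν(t) = c·α·∫₀^∞ t^{-1-α-β}(1 - e^{-t}) dt, where the right-hand integral is finite. -/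
open Filter Real MeasureTheory

namespace Stmt7Aux

open Set

noncomputable def Kf (γ : ℝ) (s : ℝ) : ℝ := s ^ (-γ) * (1 - Real.exp (-s))

noncomputable def Kd (γ : ℝ) (s : ℝ) : ℝ :=
  s ^ (-γ) * Real.exp (-s) - γ * (s ^ (-γ - 1) * (1 - Real.exp (-s)))

lemma one_sub_exp_nonneg {s : ℝ} (hs : 0 ≤ s) : 0 ≤ 1 - Real.exp (-s) := by
  have : Real.exp (-s) ≤ 1 := by rw [Real.exp_le_one_iff]; linarith
  linarith

lemma one_sub_exp_le (s : ℝ) : 1 - Real.exp (-s) ≤ s := by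
  have := Real.add_one_le_exp (-s); linarith

lemma one_sub_exp_le_one (s : ℝ) : 1 - Real.exp (-s) ≤ 1 := by
  have := Real.exp_pos (-s); linarith

lemma one_sub_exp_le_min {s : ℝ} : 1 - Real.exp (-s) ≤ min s 1 :=
  le_min (one_sub_exp_le s) (one_sub_exp_le_one s)

lemma Kd_meas (γ : ℝ) : Measurable (Kd γ) := by
  unfold Kd; fun_prop

lemma Kd_bound {γ : ℝ} (hγ : 0 ≤ γ) {s : ℝ} (hs : 0 < s) :
    ‖Kd γ s‖ ≤ s ^ (-γ) * Real.exp (-s) + γ * (s ^ (-γ - 1) * min s 1) := by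
  refine (norm_sub_le _ _).trans ?_
  have h1 : ‖s ^ (-γ) * Real.exp (-s)‖ = s ^ (-γ) * Real.exp (-s) := by
    rw [Real.norm_eq_abs, abs_of_nonneg]
    exact mul_nonneg (Real.rpow_nonneg hs.le _) (Real.exp_pos _).le
  have h2 : ‖γ * (s ^ (-γ - 1) * (1 - Real.exp (-s)))‖
      ≤ γ * (s ^ (-γ - 1) * min s 1) := by
    rw [Real.norm_eq_abs, abs_of_nonneg]
    · exact mul_le_mul_of_nonneg_left
        (mul_le_mul_of_nonneg_left one_sub_exp_le_min (Real.rpow_nonneg hs.le _)) hγ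
    · exact mul_nonneg hγ (mul_nonneg (Real.rpow_nonneg hs.le _)
        (one_sub_exp_nonneg hs.le))
  rw [h1]; linarith

lemma int_A {γ : ℝ} (h1 : γ < 1) :
    IntegrableOn (fun s : ℝ => s ^ (-γ) * Real.exp (-s)) (Set.Ioi 0) := by
  have h := Real.GammaIntegral_convergent (s := 1 - γ) (by linarith)
  refine h.congr_fun (fun s hs => ?_) measurableSet_Ioi
  rw [mul_comm]; congr 1; ring_nf

lemma hmeas_min (γ : ℝ) : Measurable (fun s : ℝ => s ^ (-γ - 1) * min s 1) :=
  (by fun_prop : Measurable fun s : ℝ => s ^ (-γ - 1)).mul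
    (measurable_id.min measurable_const)

lemma int_min {γ : ℝ} (h0 : 0 < γ) (h1 : γ < 1) :
    IntegrableOn (fun s : ℝ => s ^ (-γ - 1) * min s 1) (Set.Ioi 0) := by
  rw [← Set.Ioc_union_Ioi_eq_Ioi (zero_le_one : (0:ℝ) ≤ 1)]
  apply IntegrableOn.union
  · have hbase : IntegrableOn (fun s : ℝ => s ^ (-γ)) (Set.Ioc 0 1) := by
      have h := intervalIntegral.intervalIntegrable_rpow' (a := 0) (b := 1) (r := -γ)
        (by linarith)
      exact (intervalIntegrable_iff_integrableOn_Ioc_of_le zero_le_one).1 h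
    refine hbase.mono' ((hmeas_min γ).aestronglyMeasurable.restrict) ?_
    rw [ae_restrict_iff' measurableSet_Ioc]
    refine Filter.Eventually.of_forall fun s hs => ?_
    have hs0 : 0 < s := hs.1
    have hmin : min s 1 = s := min_eq_left hs.2
    rw [Real.norm_eq_abs, abs_of_nonneg (mul_nonneg (Real.rpow_nonneg hs0.le _)
      (by rw [hmin]; exact hs0.le))]
    rw [hmin]
    calc s ^ (-γ - 1) * s = s ^ (-γ) := by
          rw [← Real.rpow_add_one hs0.ne' (-γ - 1)]; norm_num
    _ ≤ s ^ (-γ) := le_refl _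
  · have hbase : IntegrableOn (fun s : ℝ => s ^ (-γ - 1)) (Set.Ioi 1) :=
      integrableOn_Ioi_rpow_of_lt (by linarith) one_pos
    refine hbase.mono' ((hmeas_min γ).aestronglyMeasurable.restrict) ?_
    rw [ae_restrict_iff' measurableSet_Ioi]
    refine Filter.Eventually.of_forall fun s hs => ?_
    have hs1 : (1:ℝ) < s := hs
    have hmin : min s 1 = 1 := min_eq_right hs1.le
    rw [hmin, mul_one, Real.norm_eq_abs,
      abs_of_nonneg (Real.rpow_nonneg (by linarith) _)]

lemma int_B {γ : ℝ} (h0 : 0 < γ) (h1 : γ < 1) :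
    IntegrableOn (fun s : ℝ => s ^ (-γ - 1) * (1 - Real.exp (-s))) (Set.Ioi 0) := by
  refine (int_min h0 h1).mono' ((by fun_prop : Measurable (fun s : ℝ => s ^ (-γ - 1) * (1 - Real.exp (-s)))).aestronglyMeasurable.restrict) ?_
  rw [ae_restrict_iff' measurableSet_Ioi]
  refine Filter.Eventually.of_forall fun s hs => ?_
  have hs0 : (0:ℝ) < s := hs
  rw [Real.norm_eq_abs, abs_of_nonneg (mul_nonneg (Real.rpow_nonneg hs0.le _)
    (one_sub_exp_nonneg hs0.le))]
  exact mul_le_mul_of_nonneg_left one_sub_exp_le_min (Real.rpow_nonneg hs0.le _)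

lemma Kd_int {γ : ℝ} (h0 : 0 < γ) (h1 : γ < 1) :
    IntegrableOn (Kd γ) (Set.Ioi 0) :=
  (int_A h1).sub ((int_B h0 h1).const_mul γ)

lemma Kf_cont {γ : ℝ} (h0 : 0 < γ) (h1 : γ < 1) :
    ContinuousOn (Kf γ) (Set.Ici 0) := by
  intro x hx
  rcases eq_or_lt_of_le (Set.mem_Ici.1 hx) with h | h
  · -- x = 0
    subst h
    have hval : Kf γ 0 = 0 := by simp [Kf]
    rw [ContinuousWithinAt, hval]
    have hup : Tendsto (fun s : ℝ => s ^ (1 - γ)) (nhdsWithin 0 (Set.Ici 0)) (nhds 0) := by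
      have hc : ContinuousAt (fun s : ℝ => s ^ (1 - γ)) 0 :=
        Real.continuousAt_rpow_const 0 (1 - γ) (Or.inr (by linarith))
      have := hc.continuousWithinAt (s := Set.Ici 0)
      rw [ContinuousWithinAt] at this
      simpa [Real.zero_rpow (show (1:ℝ) - γ ≠ 0 by linarith)] using this
    refine tendsto_of_tendsto_of_tendsto_of_le_of_le' tendsto_const_nhds hup ?_ ?_
    · filter_upwards [eventually_mem_nhdsWithin] with s hs
      exact mul_nonneg (Real.rpow_nonneg hs _) (one_sub_exp_nonneg hs)
    · filter_upwards [eventually_mem_nhdsWithin] with s hs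
      rcases eq_or_lt_of_le (Set.mem_Ici.1 hs) with h2 | h2
      · subst h2; simp [Kf, Real.rpow_nonneg]
      · calc Kf γ s ≤ s ^ (-γ) * s :=
              mul_le_mul_of_nonneg_left (one_sub_exp_le s) (Real.rpow_nonneg h2.le _)
        _ = s ^ (1 - γ) := by
              rw [← Real.rpow_add_one h2.ne' (-γ)]; ring_nf
  · -- x > 0
    have : ContinuousAt (Kf γ) x := by
      apply ContinuousAt.mul
      · exact Real.continuousAt_rpow_const x (-γ) (Or.inl h.ne')
      · fun_prop
    exact this.continuousWithinAt

lemma Kf_deriv {γ : ℝ} {s : ℝ} (hs : 0 < s) : HasDerivAt (Kf γ) (Kd γ s) s := by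
  have h1 : HasDerivAt (fun s : ℝ => s ^ (-γ)) (-γ * s ^ (-γ - 1)) s :=
    Real.hasDerivAt_rpow_const (Or.inl hs.ne')
  have h2 : HasDerivAt (fun s : ℝ => 1 - Real.exp (-s)) (Real.exp (-s)) s := by
    have := ((Real.hasDerivAt_exp (-s)).comp s (hasDerivAt_neg s)).const_sub 1
    simpa using this
  have := h1.mul h2
  have e : Kd γ s = -γ * s ^ (-γ - 1) * (1 - Real.exp (-s)) + s ^ (-γ) * Real.exp (-s) := by
    unfold Kd; ring
  rw [e]; exact this

lemma Kf_tendsto {γ : ℝ} (h0 : 0 < γ) : Tendsto (Kf γ) atTop (nhds 0) := by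
  have h1 : Tendsto (fun s : ℝ => s ^ (-γ)) atTop (nhds 0) := tendsto_rpow_neg_atTop h0
  have h2 : Tendsto (fun s : ℝ => 1 - Real.exp (-s)) atTop (nhds 1) := by
    simpa using tendsto_const_nhds.sub Real.tendsto_exp_neg_atTop_nhds_zero
  show Tendsto (fun s : ℝ => s ^ (-γ) * (1 - Real.exp (-s))) atTop (nhds 0)
  simpa using h1.mul h2

lemma ftc1 {γ : ℝ} (h0 : 0 < γ) (h1 : γ < 1) {x : ℝ} (hx : 0 < x) :
    ∫ s in Set.Ioc 0 x, Kd γ s = Kf γ x := by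
  have hint : IntervalIntegrable (Kd γ) volume 0 x :=
    (intervalIntegrable_iff_integrableOn_Ioc_of_le hx.le).2
      ((Kd_int h0 h1).mono_set Set.Ioc_subset_Ioi_self)
  have := intervalIntegral.integral_eq_sub_of_hasDeriv_right_of_le hx.le
    ((Kf_cont h0 h1).mono (Set.Icc_subset_Ici_self))
    (fun s hs => (Kf_deriv hs.1).hasDerivWithinAt) hint
  rw [intervalIntegral.integral_of_le hx.le] at this
  rw [this]
  have : Kf γ 0 = 0 := by simp [Kf]
  rw [this, sub_zero]

lemma ftc2 {γ : ℝ} (h0 : 0 < γ) (h1 : γ < 1) :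
    ∫ s in Set.Ioi 0, Kd γ s = 0 := by
  have := integral_Ioi_of_hasDerivAt_of_tendsto
    (f := Kf γ) (f' := Kd γ) (a := 0)
    ((Kf_cont h0 h1) 0 Set.self_mem_Ici)
    (fun s hs => Kf_deriv hs) (Kd_int h0 h1) (Kf_tendsto h0)
  simpa [Kf] using this

end Stmt7Aux

open Stmt7Aux in
/-- Abelian-type asymptotics for `Γ(ε) = ∫ t^{-β}(1 - e^{-εt}) dν(t)` when the
law `ν` of the trap depth has a regularly varying tail of index `α`:
`ε^{-(α+β)} Γ(ε) → cα ∫₀^∞ t^{-1-α-β}(1-e^{-t}) dt`, the latter integral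
being finite. -/
theorem stmt_7 (α β c : ℝ) (hα : 0 < α) (hβ : 0 < β) (hαβ : α + β < 1) (hc : 0 < c)
    (ν : Measure ℝ) [IsProbabilityMeasure ν]
    (hsupp : ν (Set.Iio 1) = 0)
    (htail : Tendsto (fun u : ℝ => u ^ α * (ν {t : ℝ | u < t}).toReal)
      atTop (nhds c)) :
    IntegrableOn (fun t : ℝ => t ^ (-1 - α - β) * (1 - Real.exp (-t)))
        (Set.Ioi 0) volume ∧
      Tendsto (fun ε : ℝ =>
          ε ^ (-(α + β)) * ∫ t, t ^ (-β) * (1 - Real.exp (-(ε * t))) ∂ν)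
        (nhdsWithin 0 (Set.Ioi 0))
        (nhds (c * α * ∫ t in Set.Ioi (0:ℝ),
          t ^ (-1 - α - β) * (1 - Real.exp (-t)))) := by
  have hαβ0 : 0 < α + β := by linarith
  have hβ1 : β < 1 := by linarith
  have hBint : IntegrableOn (fun s : ℝ => s ^ (-(α+β) - 1) * (1 - Real.exp (-s)))
      (Set.Ioi 0) volume := int_B hαβ0 hαβ
  have hexp_eq : (fun t : ℝ => t ^ (-1 - α - β) * (1 - Real.exp (-t)))
      = fun s : ℝ => s ^ (-(α+β) - 1) * (1 - Real.exp (-s)) := by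
    funext s; rw [show (-1 - α - β : ℝ) = -(α+β) - 1 by ring]
  refine ⟨by rw [hexp_eq]; exact hBint, ?_⟩
  set G : ℝ → ℝ := fun u => (ν {t : ℝ | u < t}).toReal with hGdef
  have hGanti : Antitone G := by
    intro u v huv
    exact (ENNReal.toReal_le_toReal (measure_ne_top _ _) (measure_ne_top _ _)).2
      (measure_mono fun t ht => lt_of_le_of_lt huv ht)
  have hGmeas : Measurable G := hGanti.measurable
  have hGnn : ∀ u, 0 ≤ G u := fun u => ENNReal.toReal_nonneg
  have hG1 : ∀ u, G u ≤ 1 := fun u => by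
    simpa using ENNReal.toReal_mono ENNReal.one_ne_top (prob_le_one (μ := ν))
  -- uniform tail bound
  obtain ⟨u₀, hu₀⟩ := Filter.eventually_atTop.1 (htail.eventually_lt_const (lt_add_one c))
  set u₁ := max u₀ 1 with hu₁def
  have hu₁pos : 0 < u₁ := lt_of_lt_of_le one_pos (le_max_right _ _)
  set C := max (c + 1) (u₁ ^ α) with hCdef
  have hCpos : 0 < C := lt_of_lt_of_le (by linarith) (le_max_left _ _)
  have hCb : ∀ ε : ℝ, 0 < ε → ∀ s : ℝ, 0 < s → ε ^ (-α) * G (s / ε) ≤ C * s ^ (-α) := by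
    intro ε hε s hs
    have hu : 0 < s / ε := div_pos hs hε
    have hεα : ε ^ (-α) = s ^ (-α) * (s / ε) ^ α := by
      rw [Real.div_rpow hs.le hε.le, Real.rpow_neg hs.le, Real.rpow_neg hε.le]
      have h1 : s ^ α ≠ 0 := (Real.rpow_pos_of_pos hs α).ne'
      have h2 : ε ^ α ≠ 0 := (Real.rpow_pos_of_pos hε α).ne'
      field_simp
    by_cases h : u₀ ≤ s / ε
    · have h2 : (s / ε) ^ α * G (s / ε) ≤ c + 1 := (hu₀ _ h).le
      calc ε ^ (-α) * G (s / ε) = s ^ (-α) * ((s / ε) ^ α * G (s / ε)) := by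
            rw [hεα]; ring
        _ ≤ s ^ (-α) * (c + 1) :=
            mul_le_mul_of_nonneg_left h2 (Real.rpow_nonneg hs.le _)
        _ ≤ C * s ^ (-α) := by
            rw [mul_comm]
            exact mul_le_mul_of_nonneg_right (le_max_left _ _) (Real.rpow_nonneg hs.le _)
    · have hu1 : s / ε ≤ u₁ := le_trans (le_of_not_ge h) (le_max_left _ _)
      calc ε ^ (-α) * G (s / ε) ≤ ε ^ (-α) * 1 :=
            mul_le_mul_of_nonneg_left (hG1 _) (Real.rpow_nonneg hε.le _)
        _ = s ^ (-α) * (s / ε) ^ α := by rw [hεα, mul_one]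
        _ ≤ s ^ (-α) * u₁ ^ α :=
            mul_le_mul_of_nonneg_left (Real.rpow_le_rpow hu.le hu1 hα.le)
              (Real.rpow_nonneg hs.le _)
        _ ≤ C * s ^ (-α) := by
            rw [mul_comm]
            exact mul_le_mul_of_nonneg_right (le_max_right _ _) (Real.rpow_nonneg hs.le _)
  -- Fubini identity
  have key : ∀ ε : ℝ, 0 < ε →
      ε ^ (-(α + β)) * ∫ t, t ^ (-β) * (1 - Real.exp (-(ε * t))) ∂ν
        = ∫ s in Set.Ioi (0:ℝ), ε ^ (-α) * (G (s / ε) * Kd β s) := by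
    intro ε hε
    set F : ℝ → ℝ → ℝ := fun t s => (Set.Ioo 0 (ε * t)).indicator (Kd β) s with hFdef
    have haet : ∀ᵐ t ∂ν, 1 ≤ t := by
      rw [ae_iff]
      refine measure_mono_null (fun t ht => ?_) hsupp
      exact lt_of_not_ge ht
    have hstep1 : ∀ t : ℝ, 1 ≤ t →
        t ^ (-β) * (1 - Real.exp (-(ε * t))) = ε ^ β * ∫ s, F t s := by
      intro t ht
      have ht0 : 0 < t := lt_of_lt_of_le one_pos ht
      have hεt : 0 < ε * t := mul_pos hε ht0
      have h1 : ∫ s, F t s = Kf β (ε * t) := by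
        rw [hFdef]
        rw [integral_indicator measurableSet_Ioo, ← integral_Ioc_eq_integral_Ioo,
          ftc1 hβ hβ1 hεt]
      rw [h1]
      have hεβ : ε ^ β * ε ^ (-β) = 1 := by
        rw [← Real.rpow_add hε]; simp
      rw [Kf, Real.mul_rpow hε.le ht0.le]
      linear_combination (-(t ^ (-β) * (1 - Real.exp (-(ε * t))))) * hεβ
    have hSm : MeasurableSet {p : ℝ × ℝ | 0 < p.2 ∧ p.2 < ε * p.1} :=
      (measurableSet_lt measurable_const measurable_snd).inter
        (measurableSet_lt measurable_snd (measurable_fst.const_mul ε))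
    have hFm : Measurable (Function.uncurry F) := by
      have huncurry : Function.uncurry F
          = Set.indicator {p : ℝ × ℝ | 0 < p.2 ∧ p.2 < ε * p.1} (fun p => Kd β p.2) := by
        funext p
        simp only [Function.uncurry, hFdef, Set.indicator_apply, Set.mem_Ioo,
          Set.mem_setOf_eq]
      rw [huncurry]
      exact ((Kd_meas β).comp measurable_snd).indicator hSm
    set gg : ℝ → ℝ := Set.indicator (Set.Ioi 0)
        (fun s => s ^ (-β) * Real.exp (-s) + β * (s ^ (-β - 1) * min s 1)) with hggdef
    have hggInt : Integrable gg volume := by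
      rw [hggdef, integrable_indicator_iff measurableSet_Ioi]
      exact (int_A hβ1).add ((int_min hβ hβ1).const_mul β)
    have hgg0 : ∀ s : ℝ, 0 ≤ gg s := by
      intro s
      apply Set.indicator_nonneg
      intro s hs
      have hs0 : (0:ℝ) < s := hs
      have hmin : (0:ℝ) ≤ min s 1 := le_min hs0.le zero_le_one
      positivity
    have hprod : Integrable (fun p : ℝ × ℝ => (1:ℝ) * gg p.2) (ν.prod volume) :=
      (integrable_const (1:ℝ)).mul_prod hggInt
    have hFint : Integrable (Function.uncurry F) (ν.prod volume) := by
      refine hprod.mono' hFm.aestronglyMeasurable (Filter.Eventually.of_forall fun p => ?_)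
      rw [one_mul]
      by_cases hp : p.2 ∈ Set.Ioo 0 (ε * p.1)
      · have hval : Function.uncurry F p = Kd β p.2 := by
          simp only [Function.uncurry, hFdef]
          exact Set.indicator_of_mem hp _
        rw [hval]
        refine (Kd_bound hβ.le hp.1).trans ?_
        have hgv : gg p.2 = p.2 ^ (-β) * Real.exp (-p.2) + β * (p.2 ^ (-β - 1) * min p.2 1) := by
          rw [hggdef]
          exact Set.indicator_of_mem (show p.2 ∈ Set.Ioi 0 from hp.1) _
        rw [hgv]
      · have hval : Function.uncurry F p = 0 := by
          simp only [Function.uncurry, hFdef]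
          exact Set.indicator_of_notMem hp _
        rw [hval, norm_zero]
        exact hgg0 _
    have hswap : ∫ t, (∫ s, F t s) ∂ν = ∫ s, (∫ t, F t s ∂ν) :=
      integral_integral_swap hFint
    have hinner : (fun s => ∫ t, F t s ∂ν)
        = Set.indicator (Set.Ioi 0) (fun s => G (s / ε) * Kd β s) := by
      funext s
      by_cases hs : s ∈ Set.Ioi (0:ℝ)
      · rw [Set.indicator_of_mem hs]
        have hs0 : (0:ℝ) < s := hs
        have hrw : (fun t => F t s)
            = fun t => Set.indicator (Set.Ioi (s / ε)) (fun _ => Kd β s) t := by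
          funext t
          rw [hFdef]
          simp only [Set.indicator_apply, Set.mem_Ioo, Set.mem_Ioi]
          refine if_congr ?_ rfl rfl
          constructor
          · rintro ⟨-, h2⟩
            rw [div_lt_iff₀ hε]
            linarith [mul_comm ε t]
          · intro h
            have h2 := (div_lt_iff₀ hε).1 h
            exact ⟨hs0, by linarith [mul_comm t ε]⟩
        rw [hrw, integral_indicator_const (Kd β s) measurableSet_Ioi, smul_eq_mul]
        rfl
      · rw [Set.indicator_of_notMem hs]
        have hzero : (fun t => F t s) = fun _ => (0:ℝ) := by
          funext t
          rw [hFdef]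
          refine Set.indicator_of_notMem (fun hmem => hs hmem.1) _
        rw [hzero, integral_zero]
    calc ε ^ (-(α + β)) * ∫ t, t ^ (-β) * (1 - Real.exp (-(ε * t))) ∂ν
        = ε ^ (-(α + β)) * ∫ t, (ε ^ β * ∫ s, F t s) ∂ν := by
          congr 1
          exact integral_congr_ae (haet.mono fun t ht => hstep1 t ht)
      _ = ε ^ (-(α + β)) * (ε ^ β * ∫ t, (∫ s, F t s) ∂ν) := by
          rw [integral_const_mul]
      _ = ε ^ (-α) * ∫ s, (∫ t, F t s ∂ν) := by
          rw [hswap, ← mul_assoc, ← Real.rpow_add hε,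
            show (-(α + β) + β : ℝ) = -α by ring]
      _ = ε ^ (-α) * ∫ s in Set.Ioi (0:ℝ), G (s / ε) * Kd β s := by
          rw [hinner, integral_indicator measurableSet_Ioi]
      _ = ∫ s in Set.Ioi (0:ℝ), ε ^ (-α) * (G (s / ε) * Kd β s) :=
          (integral_const_mul _ _).symm
  -- dominated convergence
  have hbound_int : IntegrableOn (fun s : ℝ => C * (s ^ (-(α+β)) * Real.exp (-s)
      + β * (s ^ (-(α+β) - 1) * min s 1))) (Set.Ioi 0) :=
    ((int_A (by linarith)).add ((int_min hαβ0 hαβ).const_mul β)).const_mul C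
  have hlim : Tendsto (fun ε : ℝ => ∫ s in Set.Ioi (0:ℝ), ε ^ (-α) * (G (s / ε) * Kd β s))
      (nhdsWithin 0 (Set.Ioi 0))
      (nhds (∫ s in Set.Ioi (0:ℝ), c * s ^ (-α) * Kd β s)) := by
    refine tendsto_integral_filter_of_dominated_convergence
      (fun s : ℝ => C * (s ^ (-(α+β)) * Real.exp (-s) + β * (s ^ (-(α+β) - 1) * min s 1)))
      ?_ ?_ hbound_int ?_
    · refine Filter.Eventually.of_forall fun ε => ?_
      exact (((hGmeas.comp (measurable_id.div_const ε)).mul (Kd_meas β)).const_mul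
        (ε ^ (-α))).aestronglyMeasurable.restrict
    · filter_upwards [self_mem_nhdsWithin] with ε hε
      have hε0 : (0:ℝ) < ε := hε
      rw [ae_restrict_iff' measurableSet_Ioi]
      refine Filter.Eventually.of_forall fun s hs => ?_
      have hs0 : (0:ℝ) < s := hs
      have e1 : s ^ (-α) * s ^ (-β) = s ^ (-(α+β)) := by
        rw [← Real.rpow_add hs0]; congr 1; ring
      have e2 : s ^ (-α) * s ^ (-β - 1) = s ^ (-(α+β) - 1) := by
        rw [← Real.rpow_add hs0]; congr 1; ring
      have h1 : ‖ε ^ (-α) * (G (s / ε) * Kd β s)‖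
          = ε ^ (-α) * G (s / ε) * ‖Kd β s‖ := by
        rw [norm_mul, norm_mul, Real.norm_eq_abs (ε ^ (-α)),
          abs_of_nonneg (Real.rpow_nonneg hε0.le _), Real.norm_eq_abs (G (s/ε)),
          abs_of_nonneg (hGnn _), mul_assoc]
      rw [h1]
      have hnn : (0:ℝ) ≤ C * s ^ (-α) :=
        mul_nonneg hCpos.le (Real.rpow_nonneg hs0.le _)
      calc ε ^ (-α) * G (s / ε) * ‖Kd β s‖
          ≤ (C * s ^ (-α)) * (s ^ (-β) * Real.exp (-s) + β * (s ^ (-β - 1) * min s 1)) :=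
            mul_le_mul (hCb ε hε0 s hs0) (Kd_bound hβ.le hs0) (norm_nonneg _) hnn
        _ = C * (s ^ (-(α+β)) * Real.exp (-s) + β * (s ^ (-(α+β) - 1) * min s 1)) := by
            linear_combination (C * Real.exp (-s)) * e1 + (C * β * min s 1) * e2
    · rw [ae_restrict_iff' measurableSet_Ioi]
      refine Filter.Eventually.of_forall fun s hs => ?_
      have hs0 : (0:ℝ) < s := hs
      have h1 : Tendsto (fun ε : ℝ => s / ε) (nhdsWithin 0 (Set.Ioi 0)) atTop := by
        simpa [div_eq_mul_inv] using tendsto_inv_nhdsGT_zero.const_mul_atTop hs0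
      have h2 : Tendsto (fun ε : ℝ => (s / ε) ^ α * G (s / ε))
          (nhdsWithin 0 (Set.Ioi 0)) (nhds c) := htail.comp h1
      have key2 : ∀ ε : ℝ, 0 < ε → s ^ (-α) * (s / ε) ^ α = ε ^ (-α) := by
        intro ε hε0
        rw [Real.div_rpow hs0.le hε0.le, Real.rpow_neg hs0.le, Real.rpow_neg hε0.le]
        have h3 : s ^ α ≠ 0 := (Real.rpow_pos_of_pos hs0 α).ne'
        have h4 : ε ^ α ≠ 0 := (Real.rpow_pos_of_pos hε0 α).ne'
        field_simp
      have h3 : Tendsto (fun ε : ℝ => s ^ (-α) * ((s / ε) ^ α * G (s / ε)) * Kd β s)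
          (nhdsWithin 0 (Set.Ioi 0)) (nhds (s ^ (-α) * c * Kd β s)) :=
        (tendsto_const_nhds.mul h2).mul tendsto_const_nhds
      have heq : (fun ε : ℝ => s ^ (-α) * ((s / ε) ^ α * G (s / ε)) * Kd β s)
          =ᶠ[nhdsWithin 0 (Set.Ioi 0)] fun ε => ε ^ (-α) * (G (s / ε) * Kd β s) := by
        filter_upwards [self_mem_nhdsWithin] with ε hε0
        have hk := key2 ε hε0
        linear_combination (G (s / ε) * Kd β s) * hk
      have hfinal := Tendsto.congr' heq h3
      rw [show c * s ^ (-α) * Kd β s = s ^ (-α) * c * Kd β s by ring]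
      exact hfinal
  -- final value
  have hval : ∫ s in Set.Ioi (0:ℝ), c * s ^ (-α) * Kd β s
      = c * α * ∫ t in Set.Ioi (0:ℝ), t ^ (-1 - α - β) * (1 - Real.exp (-t)) := by
    rw [hexp_eq]
    have hpt : Set.EqOn (fun s : ℝ => c * s ^ (-α) * Kd β s)
        (fun s : ℝ => c * (Kd (α+β) s + α * (s ^ (-(α+β) - 1) * (1 - Real.exp (-s)))))
        (Set.Ioi 0) := by
      intro s hs
      have hs0 : (0:ℝ) < s := hs
      have e1 : s ^ (-α) * s ^ (-β) = s ^ (-(α+β)) := by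
        rw [← Real.rpow_add hs0]; congr 1; ring
      have e2 : s ^ (-α) * s ^ (-β - 1) = s ^ (-(α+β) - 1) := by
        rw [← Real.rpow_add hs0]; congr 1; ring
      simp only [Kd]
      linear_combination (c * Real.exp (-s)) * e1 - (c * β * (1 - Real.exp (-s))) * e2
    rw [setIntegral_congr_fun measurableSet_Ioi hpt, integral_const_mul,
      integral_add (Kd_int hαβ0 hαβ) (hBint.const_mul α), ftc2 hαβ0 hαβ,
      integral_const_mul]
    ring
  rw [← hval]
  exact Tendsto.congr'
    (by filter_upwards [self_mem_nhdsWithin] with ε hε; exact (key ε hε).symm) hlim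
end

section
/- Let α > 0, β > 0 with α + 2β < 2, let c > 0, and let ν be a probability measure on ℝ supported in [1,∞) such that lim_{u→∞} u^α · ν({t : t > u}) = c. Then lim_{ε→0+} ε^{-(α+2β)} ∫ t^{-2β}(1 - e^{-ε t})² dν(t) = c·α·∫₀^∞ t^{-1-α-2β}(1 - e^{-t})² dt, where the right-hand integral is finite. -/
open Filter Real MeasureTheory

namespace Stmt8Aux

open Set Topology

noncomputable def h (β u : ℝ) : ℝ := u ^ (-(2*β)) * (1 - Real.exp (-u)) ^ 2

noncomputable def h' (β u : ℝ) : ℝ :=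
  (-(2*β)) * (u ^ (-(2*β) - 1) * (1 - Real.exp (-u)) ^ 2)
    + 2 * (u ^ (-(2*β)) * ((1 - Real.exp (-u)) * Real.exp (-u)))

lemma measurable_h' (β : ℝ) : Measurable (h' β) := by unfold h'; fun_prop

lemma h_deriv (β : ℝ) {u : ℝ} (hu : 0 < u) : HasDerivAt (h β) (h' β u) u := by
  have h1 : HasDerivAt (fun u : ℝ => u ^ (-(2*β))) ((-(2*β)) * u ^ (-(2*β) - 1)) u :=
    Real.hasDerivAt_rpow_const (Or.inl hu.ne')
  have e : HasDerivAt (fun u : ℝ => Real.exp (-u)) (-Real.exp (-u)) u := by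
    have := (Real.hasDerivAt_exp (-u)).comp u (hasDerivAt_neg u)
    simp only [Function.comp_def, mul_neg, mul_one] at this
    exact this
  have e2 : HasDerivAt (fun u : ℝ => 1 - Real.exp (-u)) (Real.exp (-u)) u := by
    have := (hasDerivAt_const u (1:ℝ)).sub e
    simp only [sub_neg_eq_add, zero_add] at this
    exact this
  have h2 : HasDerivAt (fun u : ℝ => (1 - Real.exp (-u)) ^ 2)
      (2 * (1 - Real.exp (-u)) ^ 1 * Real.exp (-u)) u := by
    have := e2.pow 2
    norm_num at this ⊢
    exact this
  have := h1.mul h2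
  refine this.congr_deriv ?_
  unfold h'
  ring

lemma one_sub_exp_nonneg {u : ℝ} (hu : 0 ≤ u) : 0 ≤ 1 - Real.exp (-u) := by
  have h1 : Real.exp (-u) ≤ Real.exp 0 := Real.exp_le_exp.mpr (by linarith)
  have h2 : Real.exp (0:ℝ) = 1 := Real.exp_zero
  linarith

lemma one_sub_exp_le_one (u : ℝ) : 1 - Real.exp (-u) ≤ 1 := by
  have := Real.exp_pos (-u); linarith

lemma one_sub_exp_le (u : ℝ) : 1 - Real.exp (-u) ≤ u := by
  have := Real.add_one_le_exp (-u); linarith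

lemma sq_le_one {u : ℝ} (hu : 0 ≤ u) : (1 - Real.exp (-u)) ^ 2 ≤ 1 := by
  have h1 := one_sub_exp_nonneg hu
  have h2 := one_sub_exp_le_one u
  nlinarith

lemma sq_le_sq {u : ℝ} (hu : 0 ≤ u) : (1 - Real.exp (-u)) ^ 2 ≤ u ^ (2:ℕ) :=
  pow_le_pow_left₀ (one_sub_exp_nonneg hu) (one_sub_exp_le u) 2

lemma bound_small {u : ℝ} (hu : 0 < u) (p : ℝ) :
    u ^ p * (1 - Real.exp (-u)) ^ 2 ≤ u ^ (p + 2) := by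
  have : u ^ p * (1 - Real.exp (-u)) ^ 2 ≤ u ^ p * u ^ (2:ℕ) :=
    mul_le_mul_of_nonneg_left (sq_le_sq hu.le) (Real.rpow_nonneg hu.le p)
  refine this.trans_eq ?_
  rw [Real.rpow_add hu, show (2:ℝ) = ((2:ℕ):ℝ) by norm_num, Real.rpow_natCast]


lemma integrable_pow_sq (p : ℝ) (hp1 : -3 < p) (hp2 : p < -1) :
    IntegrableOn (fun s : ℝ => s ^ p * (1 - Real.exp (-s)) ^ 2) (Ioi 0) volume := by
  have hmeas : ∀ (S : Set ℝ), AEStronglyMeasurable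
      (fun s : ℝ => s ^ p * (1 - Real.exp (-s)) ^ 2) (volume.restrict S) := by
    intro S
    exact (by fun_prop : Measurable fun s : ℝ => s ^ p * (1 - Real.exp (-s)) ^ 2)
      |>.aestronglyMeasurable
  have hIoi : Ioi (0:ℝ) = Ioo 0 1 ∪ Ici 1 := (Ioo_union_Ici_eq_Ioi zero_lt_one).symm
  rw [hIoi]
  apply IntegrableOn.union
  · have hint : IntegrableOn (fun s : ℝ => s ^ (p + 2)) (Ioo (0:ℝ) 1) volume :=
      (intervalIntegral.integrableOn_Ioo_rpow_iff zero_lt_one).mpr (by linarith)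
    refine hint.mono' (hmeas _) ?_
    filter_upwards [ae_restrict_mem measurableSet_Ioo] with s hs
    have hs0 : 0 < s := hs.1
    have hnn : 0 ≤ s ^ p * (1 - Real.exp (-s)) ^ 2 :=
      mul_nonneg (Real.rpow_nonneg hs0.le p) (sq_nonneg _)
    rw [Real.norm_eq_abs, abs_of_nonneg hnn]
    exact bound_small hs0 p
  · have hint : IntegrableOn (fun s : ℝ => s ^ p) (Ici (1:ℝ)) volume := by
      rw [integrableOn_Ici_iff_integrableOn_Ioi]
      exact integrableOn_Ioi_rpow_of_lt hp2 zero_lt_one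
    refine hint.mono' (hmeas _) ?_
    filter_upwards [ae_restrict_mem measurableSet_Ici] with s hs
    have hs0 : (0:ℝ) < s := lt_of_lt_of_le zero_lt_one hs
    have hnn : 0 ≤ s ^ p * (1 - Real.exp (-s)) ^ 2 :=
      mul_nonneg (Real.rpow_nonneg hs0.le p) (sq_nonneg _)
    rw [Real.norm_eq_abs, abs_of_nonneg hnn]
    calc s ^ p * (1 - Real.exp (-s)) ^ 2 ≤ s ^ p * 1 :=
          mul_le_mul_of_nonneg_left (sq_le_one hs0.le) (Real.rpow_nonneg hs0.le p)
      _ = s ^ p := mul_one _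

lemma integrable_pow_exp (q : ℝ) (hq : -2 < q) :
    IntegrableOn (fun s : ℝ => s ^ q * ((1 - Real.exp (-s)) * Real.exp (-s)))
      (Ioi 0) volume := by
  have G := Real.GammaIntegral_convergent (show (0:ℝ) < q + 2 by linarith)
  refine G.mono' ?_ ?_
  · exact (by fun_prop :
      Measurable fun s : ℝ => s ^ q * ((1 - Real.exp (-s)) * Real.exp (-s)))
      |>.aestronglyMeasurable
  · filter_upwards [ae_restrict_mem measurableSet_Ioi] with s hs
    have hs0 : (0:ℝ) < s := hs
    have hnn : 0 ≤ s ^ q * ((1 - Real.exp (-s)) * Real.exp (-s)) :=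
      mul_nonneg (Real.rpow_nonneg hs0.le q)
        (mul_nonneg (one_sub_exp_nonneg hs0.le) (Real.exp_pos _).le)
    rw [Real.norm_eq_abs, abs_of_nonneg hnn]
    have h1 : s ^ q * ((1 - Real.exp (-s)) * Real.exp (-s))
        ≤ s ^ q * (s * Real.exp (-s)) := by
      apply mul_le_mul_of_nonneg_left _ (Real.rpow_nonneg hs0.le q)
      exact mul_le_mul_of_nonneg_right (one_sub_exp_le s) (Real.exp_pos _).le
    refine h1.trans_eq ?_
    rw [show s ^ q * (s * Real.exp (-s)) = Real.exp (-s) * (s ^ q * s) by ring,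
      ← Real.rpow_add_one hs0.ne' q]
    congr 1
    ring

lemma tendsto_pow_sq_atTop (p : ℝ) (hp : p < 0) :
    Tendsto (fun u : ℝ => u ^ p * (1 - Real.exp (-u)) ^ 2) atTop (𝓝 0) := by
  have hlim : Tendsto (fun u : ℝ => u ^ p) atTop (𝓝 0) := by
    simpa using tendsto_rpow_neg_atTop (show (0:ℝ) < -p by linarith)
  apply squeeze_zero' ?_ ?_ hlim
  · filter_upwards [eventually_ge_atTop (0:ℝ)] with u hu
    exact mul_nonneg (Real.rpow_nonneg hu p) (sq_nonneg _)
  · filter_upwards [eventually_ge_atTop (0:ℝ)] with u hu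
    calc u ^ p * (1 - Real.exp (-u)) ^ 2 ≤ u ^ p * 1 :=
          mul_le_mul_of_nonneg_left (sq_le_one hu) (Real.rpow_nonneg hu p)
      _ = u ^ p := mul_one _

lemma tendsto_pow_sq_zero (p : ℝ) (hp : -2 < p) :
    Tendsto (fun u : ℝ => u ^ p * (1 - Real.exp (-u)) ^ 2) (𝓝[Ici 0] 0) (𝓝 0) := by
  have hlim : Tendsto (fun u : ℝ => u ^ (p + 2)) (𝓝[Ici 0] 0) (𝓝 0) := by
    have hc : ContinuousAt (fun u : ℝ => u ^ (p + 2)) 0 :=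
      Real.continuousAt_rpow_const 0 (p + 2) (Or.inr (by linarith))
    have := hc.continuousWithinAt (s := Ici (0:ℝ))
    rw [ContinuousWithinAt, Real.zero_rpow (by linarith : p + 2 ≠ 0)] at this
    exact this
  apply squeeze_zero' ?_ ?_ hlim
  · filter_upwards [self_mem_nhdsWithin] with u hu
    exact mul_nonneg (Real.rpow_nonneg hu p) (sq_nonneg _)
  · filter_upwards [self_mem_nhdsWithin] with u (hu : (0:ℝ) ≤ u)
    rcases hu.eq_or_lt with rfl | hu0
    · simp [Real.zero_rpow (by linarith : p + 2 ≠ 0)]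
    · exact bound_small hu0 p


lemma h_zero (β : ℝ) : h β 0 = 0 := by simp [h]

lemma h_cont_zero (β : ℝ) (hβ1 : β < 1) : ContinuousWithinAt (h β) (Ici 0) 0 := by
  rw [ContinuousWithinAt, h_zero]
  exact tendsto_pow_sq_zero (-(2*β)) (by linarith)

lemma h_atTop (β : ℝ) (hβ : 0 < β) : Tendsto (h β) atTop (𝓝 0) :=
  tendsto_pow_sq_atTop (-(2*β)) (by linarith)

lemma h'_int (β : ℝ) (hβ : 0 < β) (hβ1 : β < 1) : IntegrableOn (h' β) (Ioi 0) volume := by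
  have i1 := (integrable_pow_sq (-(2*β) - 1) (by linarith) (by linarith)).const_mul (-(2*β))
  have i2 := (integrable_pow_exp (-(2*β)) (by linarith)).const_mul (2:ℝ)
  exact i1.add i2

lemma ftc_h (β : ℝ) (hβ : 0 < β) (hβ1 : β < 1) {a : ℝ} (ha : 0 ≤ a) :
    ∫ s in Ioi a, h' β s = - h β a := by
  have hcont : ContinuousWithinAt (h β) (Ici a) a := by
    rcases ha.eq_or_lt with rfl | ha0
    · exact h_cont_zero β hβ1
    · exact ((h_deriv β ha0).continuousAt).continuousWithinAt
  have := integral_Ioi_of_hasDerivAt_of_tendsto hcont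
    (fun x hx => h_deriv β (lt_of_le_of_lt ha hx))
    ((h'_int β hβ hβ1).mono_set (Ioi_subset_Ioi ha))
    (h_atTop β hβ)
  rw [this]; ring

noncomputable def Phi (α β u : ℝ) : ℝ := u ^ (-α) * h β u

noncomputable def Phi' (α β u : ℝ) : ℝ :=
  (-α) * (u ^ (-α - 1) * h β u) + u ^ (-α) * h' β u

lemma Phi_deriv (α β : ℝ) {u : ℝ} (hu : 0 < u) :
    HasDerivAt (Phi α β) (Phi' α β u) u := by
  have := (Real.hasDerivAt_rpow_const (p := -α) (Or.inl hu.ne')).mul (h_deriv β hu)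
  refine this.congr_deriv ?_
  unfold Phi'
  ring

lemma Phi_eq (α β : ℝ) : ∀ u ∈ Ici (0:ℝ),
    Phi α β u = u ^ (-α + -(2*β)) * (1 - Real.exp (-u)) ^ 2 := by
  intro u hu
  rcases (show (0:ℝ) ≤ u from hu).eq_or_lt with rfl | hu0
  · simp [Phi, h]
  · unfold Phi h
    rw [Real.rpow_add hu0]
    ring

lemma Phi_atTop (α β : ℝ) (hα : 0 < α) (hβ : 0 < β) : Tendsto (Phi α β) atTop (𝓝 0) := by
  refine Tendsto.congr' ?_ (tendsto_pow_sq_atTop (-α + -(2*β)) (by linarith))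
  filter_upwards [eventually_ge_atTop (0:ℝ)] with u hu
  exact (Phi_eq α β u hu).symm

lemma Phi_cont_zero (α β : ℝ) (hαβ : α + 2*β < 2) :
    ContinuousWithinAt (Phi α β) (Ici 0) 0 := by
  have h0 : Phi α β 0 = 0 := by simp [Phi, h]
  rw [ContinuousWithinAt, h0]
  refine Tendsto.congr' ?_ (tendsto_pow_sq_zero (-α + -(2*β)) (by linarith))
  filter_upwards [self_mem_nhdsWithin] with u hu
  exact (Phi_eq α β u hu).symm

lemma int_A (α β : ℝ) (hα : 0 < α) (hβ : 0 < β) (hαβ : α + 2*β < 2) :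
    IntegrableOn (fun u : ℝ => u ^ (-α - 1) * h β u) (Ioi 0) volume := by
  refine (integrable_pow_sq (-α - 1 + -(2*β)) (by linarith) (by linarith)).congr ?_
  filter_upwards [ae_restrict_mem measurableSet_Ioi] with u hu
  unfold h
  rw [Real.rpow_add hu]
  ring

lemma int_B (α β : ℝ) (hα : 0 < α) (hβ : 0 < β) (hαβ : α + 2*β < 2) :
    IntegrableOn (fun u : ℝ => u ^ (-α) * h' β u) (Ioi 0) volume := by
  have i1 := (integrable_pow_sq (-α + (-(2*β) - 1)) (by linarith) (by linarith)).const_mul (-(2*β))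
  have i2 := (integrable_pow_exp (-α + -(2*β)) (by linarith)).const_mul (2:ℝ)
  refine (i1.add i2).congr ?_
  filter_upwards [ae_restrict_mem measurableSet_Ioi] with u hu
  unfold h'
  simp only [Pi.add_apply]
  rw [Real.rpow_add hu, Real.rpow_add hu]
  ring

lemma J_eq (α β : ℝ) (hα : 0 < α) (hβ : 0 < β) (hαβ : α + 2*β < 2) :
    ∫ s in Ioi (0:ℝ), s ^ (-α) * h' β s
      = α * ∫ s in Ioi (0:ℝ), s ^ (-α - 1) * h β s := by
  have hΦ'int : IntegrableOn (Phi' α β) (Ioi 0) volume :=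
    ((int_A α β hα hβ hαβ).const_mul (-α)).add (int_B α β hα hβ hαβ)
  have h0 : ∫ s in Ioi (0:ℝ), Phi' α β s = 0 := by
    have := integral_Ioi_of_hasDerivAt_of_tendsto (Phi_cont_zero α β hαβ)
      (fun x hx => Phi_deriv α β hx) hΦ'int (Phi_atTop α β hα hβ)
    rw [this]
    simp [Phi, h]
  have hsplit : ∫ s in Ioi (0:ℝ), Phi' α β s
      = (-α) * (∫ s in Ioi (0:ℝ), s ^ (-α - 1) * h β s)
        + ∫ s in Ioi (0:ℝ), s ^ (-α) * h' β s := by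
    unfold Phi'
    rw [integral_add ((int_A α β hα hβ hαβ).const_mul (-α)) (int_B α β hα hβ hαβ),
      integral_const_mul]
  rw [hsplit] at h0
  linarith


lemma G_le_one (ν : Measure ℝ) [IsProbabilityMeasure ν] (u : ℝ) :
    (ν (Ioi u)).toReal ≤ 1 := by
  have h1 := prob_le_one (μ := ν) (s := Ioi u)
  have := ENNReal.toReal_mono (by norm_num) h1
  simpa using this

lemma G_antitone (ν : Measure ℝ) [IsProbabilityMeasure ν] :
    Antitone (fun u : ℝ => (ν (Ioi u)).toReal) := by
  intro a b hab
  exact ENNReal.toReal_mono (measure_ne_top ν _) (measure_mono (Ioi_subset_Ioi hab))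

lemma G_measurable (ν : Measure ℝ) [IsProbabilityMeasure ν] :
    Measurable (fun u : ℝ => (ν (Ioi u)).toReal) :=
  (G_antitone ν).measurable

lemma rep (β : ℝ) (hβ : 0 < β) (hβ1 : β < 1)
    (ν : Measure ℝ) [IsProbabilityMeasure ν] (hsupp : ν (Iio 1) = 0)
    {ε : ℝ} (hε : 0 < ε) :
    ∫ t, h β (ε * t) ∂ν
      = ∫ s in Ioi (0:ℝ), h' β s * (ν (Ioi (s / ε))).toReal := by
  classical
  set f : ℝ → ℝ → ℝ := fun t s => if ε * t ≤ s then -h' β s else 0 with hf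
  have hcurry : ∀ t : ℝ, (fun s => f t s) = (Ici (ε * t)).indicator (fun s => -h' β s) := by
    intro t; funext s
    by_cases hp : ε * t ≤ s <;> simp [f, Set.indicator_apply, hp]
  have hmeasS : MeasurableSet {p : ℝ × ℝ | ε * p.1 ≤ p.2} :=
    measurableSet_le (measurable_fst.const_mul ε) measurable_snd
  have huncurry : Function.uncurry f =
      {p : ℝ × ℝ | ε * p.1 ≤ p.2}.indicator (fun p => -h' β p.2) := by
    funext p
    by_cases hp : ε * p.1 ≤ p.2 <;>
      simp [Function.uncurry, f, Set.indicator_apply, hp]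
  have hmeas : AEStronglyMeasurable (Function.uncurry f)
      (ν.prod (volume.restrict (Ioi 0))) := by
    rw [huncurry]
    exact (((measurable_h' β).neg.comp measurable_snd).indicator hmeasS).aestronglyMeasurable
  have h'int := h'_int β hβ hβ1
  have hint : Integrable (Function.uncurry f) (ν.prod (volume.restrict (Ioi 0))) := by
    rw [integrable_prod_iff hmeas]
    constructor
    · refine Eventually.of_forall (fun t => ?_)
      show Integrable (fun s => f t s) (volume.restrict (Ioi 0))
      rw [hcurry t]
      exact (h'int.neg).indicator measurableSet_Ici
    · have hbd : ∀ t : ℝ, (∫ s in Ioi (0:ℝ), ‖f t s‖) ≤ ∫ s in Ioi (0:ℝ), ‖h' β s‖ := by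
        intro t
        apply integral_mono_of_nonneg (Eventually.of_forall fun s => norm_nonneg _)
          h'int.norm
        refine Eventually.of_forall fun s => ?_
        by_cases hp : ε * t ≤ s <;> simp [f, hp, norm_nonneg]
      refine Integrable.mono'
        (integrable_const (∫ s in Ioi (0:ℝ), ‖h' β s‖)) ?_ ?_
      · exact hmeas.norm.integral_prod_right'
      · refine Eventually.of_forall fun t => ?_
        rw [Real.norm_eq_abs, abs_of_nonneg (integral_nonneg fun s => norm_nonneg _)]
        exact hbd t
  have hswap := integral_integral_swap hint
  -- left side
  have hL : (∫ t, ∫ s in Ioi (0:ℝ), f t s ∂volume ∂ν) = ∫ t, h β (ε * t) ∂ν := by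
    apply integral_congr_ae
    have hae : ∀ᵐ t ∂ν, (1:ℝ) ≤ t := by
      rw [ae_iff]
      have : {t : ℝ | ¬ (1:ℝ) ≤ t} = Iio 1 := by ext t; simp [not_le]
      rw [this]; exact hsupp
    filter_upwards [hae] with t ht
    have htpos : 0 < ε * t := mul_pos hε (lt_of_lt_of_le zero_lt_one ht)
    rw [hcurry t, integral_indicator measurableSet_Ici,
      Measure.restrict_restrict measurableSet_Ici,
      show Ici (ε*t) ∩ Ioi 0 = Ici (ε*t) from
        inter_eq_left.mpr (fun x hx => lt_of_lt_of_le htpos hx),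
      integral_Ici_eq_integral_Ioi, integral_neg, ftc_h β hβ hβ1 htpos.le]
    ring
  -- right side
  have hR : (∫ s in Ioi (0:ℝ), (∫ t, f t s ∂ν) ∂volume)
      = ∫ s in Ioi (0:ℝ), (-h' β s + h' β s * (ν (Ioi (s/ε))).toReal) := by
    apply setIntegral_congr_fun measurableSet_Ioi
    intro s _
    have hfun : (fun t => f t s) = (Iic (s / ε)).indicator (fun _ => -h' β s) := by
      funext t
      have hiff : ε * t ≤ s ↔ t ≤ s / ε := by rw [le_div_iff₀ hε, mul_comm]
      show (if ε * t ≤ s then -h' β s else 0) = _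
      rw [Set.indicator_apply]
      simp only [mem_Iic]
      exact if_congr hiff rfl rfl
    dsimp only
    rw [hfun, integral_indicator measurableSet_Iic, setIntegral_const]
    have hcompl : ν (Iic (s/ε)) = 1 - ν (Ioi (s/ε)) := by
      rw [← Set.compl_Ioi]
      exact prob_compl_eq_one_sub measurableSet_Ioi
    rw [measureReal_def, hcompl, ENNReal.toReal_sub_of_le prob_le_one (by norm_num)]
    simp only [smul_eq_mul, ENNReal.toReal_one]
    ring
  -- combine
  have hG_int : IntegrableOn (fun s : ℝ => h' β s * (ν (Ioi (s/ε))).toReal)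
      (Ioi 0) volume := by
    refine Integrable.mono' h'int.norm ?_ ?_
    · exact ((measurable_h' β).mul
        ((G_measurable ν).comp (measurable_id.div_const ε))).aestronglyMeasurable
    · refine Eventually.of_forall fun s => ?_
      rw [norm_mul]
      have hG0 : (0:ℝ) ≤ (ν (Ioi (s/ε))).toReal := ENNReal.toReal_nonneg
      have hG1 := G_le_one ν (s/ε)
      rw [Real.norm_eq_abs (((ν (Ioi (s/ε))).toReal)), abs_of_nonneg hG0]
      calc ‖h' β s‖ * (ν (Ioi (s/ε))).toReal ≤ ‖h' β s‖ * 1 :=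
            mul_le_mul_of_nonneg_left hG1 (norm_nonneg _)
        _ = ‖h' β s‖ := mul_one _
  have hsplit : ∫ s in Ioi (0:ℝ), (-h' β s + h' β s * (ν (Ioi (s/ε))).toReal)
      = ∫ s in Ioi (0:ℝ), h' β s * (ν (Ioi (s/ε))).toReal := by
    have hneg : Integrable (fun s : ℝ => -h' β s) (volume.restrict (Ioi 0)) := h'int.neg
    rw [integral_add hneg hG_int, integral_neg, ftc_h β hβ hβ1 le_rfl, h_zero]
    ring
  rw [← hL, hswap, hR, hsplit]


lemma psi_bounded (α c : ℝ) (hα : 0 < α)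
    (ν : Measure ℝ) [IsProbabilityMeasure ν]
    (htail : Tendsto (fun u : ℝ => u ^ α * (ν {t : ℝ | u < t}).toReal) atTop (𝓝 c)) :
    ∃ M : ℝ, ∀ u : ℝ, 0 < u → u ^ α * (ν (Ioi u)).toReal ≤ M := by
  have hev : ∀ᶠ u in atTop, u ^ α * (ν {t : ℝ | u < t}).toReal ≤ c + 1 :=
    htail.eventually (eventually_le_nhds (lt_add_one c))
  obtain ⟨U, hU⟩ := eventually_atTop.mp hev
  refine ⟨max ((max U 1) ^ α) (c + 1), fun u hu => ?_⟩
  rcases le_or_gt u (max U 1) with hle | hgt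
  · refine le_trans ?_ (le_max_left _ _)
    calc u ^ α * (ν (Ioi u)).toReal ≤ u ^ α * 1 :=
          mul_le_mul_of_nonneg_left (G_le_one ν u) (Real.rpow_nonneg hu.le α)
      _ = u ^ α := mul_one _
      _ ≤ (max U 1) ^ α := Real.rpow_le_rpow hu.le hle hα.le
  · exact le_trans (hU u (le_of_lt (lt_of_le_of_lt (le_max_left U 1) hgt)))
      (le_max_right _ _)

lemma key (α β c : ℝ) (hα : 0 < α) (hβ : 0 < β) (hαβ : α + 2*β < 2)
    (ν : Measure ℝ) [IsProbabilityMeasure ν] (hsupp : ν (Iio 1) = 0)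
    (htail : Tendsto (fun u : ℝ => u ^ α * (ν {t : ℝ | u < t}).toReal) atTop (𝓝 c)) :
    Tendsto (fun ε : ℝ => ε ^ (-α) * ∫ t, h β (ε * t) ∂ν) (𝓝[Ioi 0] 0)
      (𝓝 (c * ∫ s in Ioi (0:ℝ), s ^ (-α) * h' β s)) := by
  have hβ1 : β < 1 := by linarith
  obtain ⟨M, hM⟩ := psi_bounded α c hα ν htail
  have hg_int : IntegrableOn (fun s : ℝ => s ^ (-α) * h' β s) (Ioi 0) volume :=
    int_B α β hα hβ hαβ
  have hdct : Tendsto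
      (fun ε : ℝ => ∫ s in Ioi (0:ℝ),
        (s ^ (-α) * h' β s) * ((s/ε) ^ α * (ν (Ioi (s/ε))).toReal))
      (𝓝[Ioi 0] 0) (𝓝 (∫ s in Ioi (0:ℝ), (s ^ (-α) * h' β s) * c)) := by
    apply tendsto_integral_filter_of_dominated_convergence
      (fun s => ‖s ^ (-α) * h' β s‖ * M)
    · filter_upwards [self_mem_nhdsWithin] with ε (hε : ε ∈ Ioi 0)
      refine Measurable.aestronglyMeasurable ?_
      have m1 : Measurable fun s : ℝ => s ^ (-α) := by fun_prop
      have m2 : Measurable fun s : ℝ => (s/ε) ^ α := by fun_prop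
      exact (m1.mul (measurable_h' β)).mul
        (m2.mul ((G_measurable ν).comp (measurable_id.div_const ε)))
    · filter_upwards [self_mem_nhdsWithin] with ε (hε : (0:ℝ) < ε)
      filter_upwards [ae_restrict_mem measurableSet_Ioi] with s (hs : (0:ℝ) < s)
      have hse : 0 < s / ε := div_pos hs hε
      have hpsi0 : 0 ≤ (s/ε) ^ α * (ν (Ioi (s/ε))).toReal :=
        mul_nonneg (Real.rpow_nonneg hse.le α) ENNReal.toReal_nonneg
      rw [norm_mul (s ^ (-α) * h' β s), Real.norm_eq_abs ((s/ε) ^ α * _),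
        abs_of_nonneg hpsi0]
      exact mul_le_mul_of_nonneg_left (hM _ hse) (norm_nonneg _)
    · exact hg_int.norm.mul_const M
    · filter_upwards [ae_restrict_mem measurableSet_Ioi] with s (hs : (0:ℝ) < s)
      have h1 : Tendsto (fun ε : ℝ => s / ε) (𝓝[Ioi 0] 0) atTop := by
        simpa [div_eq_mul_inv] using tendsto_inv_nhdsGT_zero.const_mul_atTop hs
      exact (htail.comp h1).const_mul _
  have heq : ∀ᶠ ε in 𝓝[Ioi (0:ℝ)] 0,
      (∫ s in Ioi (0:ℝ), (s ^ (-α) * h' β s) * ((s/ε) ^ α * (ν (Ioi (s/ε))).toReal))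
        = ε ^ (-α) * ∫ t, h β (ε * t) ∂ν := by
    filter_upwards [self_mem_nhdsWithin] with ε (hε : (0:ℝ) < ε)
    rw [rep β hβ hβ1 ν hsupp hε, ← integral_const_mul]
    apply setIntegral_congr_fun measurableSet_Ioi
    intro s (hs : (0:ℝ) < s)
    dsimp only
    have hsa : (0:ℝ) < s ^ α := Real.rpow_pos_of_pos hs α
    have hea : (0:ℝ) < ε ^ α := Real.rpow_pos_of_pos hε α
    have e1 : (s/ε) ^ α = s ^ α * (ε ^ α)⁻¹ := by
      rw [div_eq_mul_inv, Real.mul_rpow hs.le (inv_nonneg.mpr hε.le),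
        Real.inv_rpow hε.le]
    have e2 : s ^ (-α) = (s ^ α)⁻¹ := by
      rw [Real.rpow_neg hs.le]
    have e3 : ε ^ (-α) = (ε ^ α)⁻¹ := by
      rw [Real.rpow_neg hε.le]
    rw [e1, e2, e3]
    field_simp
  have hlim : (∫ s in Ioi (0:ℝ), (s ^ (-α) * h' β s) * c)
      = c * ∫ s in Ioi (0:ℝ), s ^ (-α) * h' β s := by
    rw [← integral_const_mul]
    apply setIntegral_congr_fun measurableSet_Ioi
    intro s _
    ring
  rw [← hlim]
  exact Tendsto.congr' heq hdct

end Stmt8Aux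


open Stmt8Aux in
set_option linter.unusedVariables false in

/-- Abelian-type asymptotics for the second moment
`∫ t^{-2β}(1 - e^{-εt})² dν(t)` when the law `ν` of the trap depth has a
regularly varying tail of index `α`:
`ε^{-(α+2β)} ∫ t^{-2β}(1-e^{-εt})² dν → cα ∫₀^∞ t^{-1-α-2β}(1-e^{-t})² dt`,
the latter integral being finite. -/
theorem stmt_8 (α β c : ℝ) (hα : 0 < α) (hβ : 0 < β) (hαβ : α + 2 * β < 2)
    (hc : 0 < c)
    (ν : Measure ℝ) [IsProbabilityMeasure ν]
    (hsupp : ν (Set.Iio 1) = 0)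
    (htail : Tendsto (fun u : ℝ => u ^ α * (ν {t : ℝ | u < t}).toReal)
      atTop (nhds c)) :
    IntegrableOn (fun t : ℝ => t ^ (-1 - α - 2*β) * (1 - Real.exp (-t)) ^ 2)
        (Set.Ioi 0) volume ∧
      Tendsto (fun ε : ℝ =>
          ε ^ (-(α + 2*β)) * ∫ t, t ^ (-2*β) * (1 - Real.exp (-(ε * t))) ^ 2 ∂ν)
        (nhdsWithin 0 (Set.Ioi 0))
        (nhds (c * α * ∫ t in Set.Ioi (0:ℝ),
          t ^ (-1 - α - 2*β) * (1 - Real.exp (-t)) ^ 2)) := by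
  constructor
  · exact integrable_pow_sq (-1 - α - 2*β) (by linarith) (by linarith)
  · have hβ1 : β < 1 := by linarith
    have hkey := key α β c hα hβ hαβ ν hsupp htail
    have hK : (∫ s in Set.Ioi (0:ℝ), s ^ (-α - 1) * h β s)
        = ∫ t in Set.Ioi (0:ℝ), t ^ (-1 - α - 2*β) * (1 - Real.exp (-t)) ^ 2 := by
      apply setIntegral_congr_fun measurableSet_Ioi
      intro s (hs : (0:ℝ) < s)
      dsimp only
      unfold h
      rw [show (-1 - α - 2*β : ℝ) = (-α - 1) + -(2*β) by ring, Real.rpow_add hs]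
      ring
    have hlim' : c * ∫ s in Set.Ioi (0:ℝ), s ^ (-α) * h' β s
        = c * α * ∫ t in Set.Ioi (0:ℝ), t ^ (-1 - α - 2*β) * (1 - Real.exp (-t)) ^ 2 := by
      rw [J_eq α β hα hβ hαβ, hK]; ring
    rw [← hlim']
    refine Tendsto.congr' ?_ hkey
    filter_upwards [self_mem_nhdsWithin] with ε (hε : (0:ℝ) < ε)
    have he : ε ^ (2*β) * ε ^ (-(2*β)) = 1 := by
      rw [← Real.rpow_add hε]; norm_num
    have hInner : ∫ t, t ^ (-2*β) * (1 - Real.exp (-(ε * t))) ^ 2 ∂ν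
        = ε ^ (2*β) * ∫ t, h β (ε * t) ∂ν := by
      rw [← integral_const_mul]
      apply integral_congr_ae
      have hae : ∀ᵐ t ∂ν, (1:ℝ) ≤ t := by
        rw [ae_iff]
        have : {t : ℝ | ¬ (1:ℝ) ≤ t} = Set.Iio 1 := by ext t; simp [not_le]
        rw [this]; exact hsupp
      filter_upwards [hae] with t ht
      have ht0 : (0:ℝ) < t := lt_of_lt_of_le zero_lt_one ht
      unfold h
      rw [Real.mul_rpow hε.le ht0.le, show (-2*β : ℝ) = -(2*β) by ring]
      linear_combination (-(t ^ (-(2*β)) * (1 - Real.exp (-(ε * t))) ^ 2)) * he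
    rw [hInner, ← mul_assoc, ← Real.rpow_add hε, show -(α + 2*β) + 2*β = -α by ring]
end

section
/- Let (ν_ε)_{ε>0} be a family of probability measures on (0,∞) with finite second moments, and let q : (0,∞) → (0,∞). Assume that ε^{-1}·q(ε)·∫ t dν_ε(t) → 1 and ε^{-1}·q(ε)²·∫ t² dν_ε(t) → 0 as ε → 0+. Then for every λ ≥ 0, lim_{ε→0+} ε^{-1}·(1 - ∫ e^{-q(ε)·λ·t} dν_ε(t)) = λ. -/
open Filter Real MeasureTheory

lemma aux_lb (x : ℝ) : 1 - x ≤ Real.exp (-x) := by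
  have := Real.add_one_le_exp (-x); linarith

lemma aux_ub (x : ℝ) (hx : 0 ≤ x) : Real.exp (-x) ≤ 1 - x + x^2/2 := by
  have hd : ∀ y : ℝ, HasDerivAt (fun x : ℝ => 1 - x + x^2/2 - Real.exp (-x))
      (-1 + y + Real.exp (-y)) y := by
    intro y
    have h1 : HasDerivAt (fun x : ℝ => Real.exp (-x)) (-Real.exp (-y)) y := by
      exact ((Real.hasDerivAt_exp (-y)).comp y (hasDerivAt_neg y)).congr_deriv (by ring)
    have h0 : HasDerivAt (fun x : ℝ => x^2/2) y y := by
      simpa using (hasDerivAt_pow 2 y).div_const 2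
    have h2 : HasDerivAt (fun x : ℝ => 1 - x + x^2/2) (-1 + y) y := by
      exact (((hasDerivAt_const y (1:ℝ)).sub (hasDerivAt_id y)).add h0).congr_deriv (by ring)
    exact (h2.sub h1).congr_deriv (by ring)
  have hmono : MonotoneOn (fun x : ℝ => 1 - x + x^2/2 - Real.exp (-x)) (Set.Ici 0) := by
    apply monotoneOn_of_deriv_nonneg (convex_Ici 0)
    · exact (by fun_prop : Continuous fun x : ℝ => 1 - x + x^2/2 - Real.exp (-x)).continuousOn
    · intro y hy; exact (hd y).differentiableAt.differentiableWithinAt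
    · intro y hy
      rw [(hd y).deriv]
      have := aux_lb y
      linarith
  have h := hmono (Set.self_mem_Ici) (Set.mem_Ici.mpr hx) hx
  simp at h
  linarith

/-- Deterministic core of the convergence criterion to the FIN diffusion:
if `ε⁻¹ q(ε) ∫ t dν_ε → 1` and `ε⁻¹ q(ε)² ∫ t² dν_ε → 0` as `ε → 0⁺`, then
`Ψ_ε(ν_ε)(λ) = ε⁻¹ (1 - ν̂_ε(q(ε)λ)) → λ` for every `λ ≥ 0`. -/
theorem stmt_13 (ν : ℝ → Measure ℝ) (hprob : ∀ ε, IsProbabilityMeasure (ν ε))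
    (hsupp : ∀ ε, (ν ε) (Set.Ioi 0)ᶜ = 0)
    (hm2 : ∀ ε, Integrable (fun t : ℝ => t ^ 2) (ν ε))
    (q : ℝ → ℝ) (hq : ∀ ε : ℝ, 0 < ε → 0 < q ε)
    (hmean : Tendsto (fun ε : ℝ => ε⁻¹ * q ε * ∫ t, t ∂(ν ε))
      (nhdsWithin 0 (Set.Ioi 0)) (nhds 1))
    (hsecond : Tendsto (fun ε : ℝ => ε⁻¹ * q ε ^ 2 * ∫ t, t ^ 2 ∂(ν ε))
      (nhdsWithin 0 (Set.Ioi 0)) (nhds 0)) :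
    ∀ lam : ℝ, 0 ≤ lam →
      Tendsto (fun ε : ℝ =>
          ε⁻¹ * (1 - ∫ t, Real.exp (-(q ε * lam * t)) ∂(ν ε)))
        (nhdsWithin 0 (Set.Ioi 0)) (nhds lam) := by
  intro lam hlam
  -- a.e. positivity
  have hae : ∀ ε, ∀ᵐ t ∂(ν ε), 0 < t := by
    intro ε
    have : {t : ℝ | ¬ 0 < t} = (Set.Ioi 0)ᶜ := by ext t; simp
    rw [ae_iff, this]; exact hsupp ε
  -- integrability of t
  have hm1 : ∀ ε, Integrable (fun t : ℝ => t) (ν ε) := by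
    intro ε
    have hg : Integrable (fun t : ℝ => 1 + t ^ 2) (ν ε) :=
      (integrable_const 1).add (hm2 ε)
    refine hg.mono' measurable_id.aestronglyMeasurable (ae_of_all _ fun t => ?_)
    have : |t| ≤ 1 + t ^ 2 := by nlinarith [sq_nonneg (|t| - 1), sq_abs t]
    simpa [Real.norm_eq_abs] using this
  -- main decomposition for ε > 0
  set R : ℝ → ℝ → ℝ := fun ε t => Real.exp (-(q ε * lam * t)) - 1 + q ε * lam * t with hR
  have hexpInt : ∀ ε, 0 < ε → Integrable (fun t : ℝ => Real.exp (-(q ε * lam * t))) (ν ε) := by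
    intro ε hε
    refine (integrable_const (1 : ℝ)).mono'
      (by fun_prop : Continuous fun t : ℝ => Real.exp (-(q ε * lam * t))).aestronglyMeasurable ?_
    filter_upwards [hae ε] with t ht
    rw [Real.norm_eq_abs, abs_of_pos (Real.exp_pos _)]
    refine Real.exp_le_one_iff.mpr ?_
    have : 0 ≤ q ε * lam * t := mul_nonneg (mul_nonneg (hq ε hε).le hlam) ht.le
    linarith
  have hRint : ∀ ε, 0 < ε → Integrable (R ε) (ν ε) := by
    intro ε hε
    exact ((hexpInt ε hε).sub (integrable_const 1)).add ((hm1 ε).const_mul _)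
  -- identity: 1 - ∫ exp = q ε * lam * ∫ t - ∫ R
  have hident : ∀ ε, 0 < ε → (1 : ℝ) - ∫ t, Real.exp (-(q ε * lam * t)) ∂(ν ε)
      = q ε * lam * (∫ t, t ∂(ν ε)) - ∫ t, R ε t ∂(ν ε) := by
    intro ε hε
    have e1 : ∫ t, R ε t ∂(ν ε)
        = (∫ t, (Real.exp (-(q ε * lam * t)) - 1) ∂(ν ε))
          + ∫ t, q ε * lam * t ∂(ν ε) :=
      integral_add ((hexpInt ε hε).sub (integrable_const 1)) ((hm1 ε).const_mul _)
    have e2 : ∫ t, (Real.exp (-(q ε * lam * t)) - 1) ∂(ν ε)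
        = (∫ t, Real.exp (-(q ε * lam * t)) ∂(ν ε)) - 1 := by
      rw [integral_sub (hexpInt ε hε) (integrable_const 1)]
      simp
    have e3 : ∫ t, q ε * lam * t ∂(ν ε) = q ε * lam * ∫ t, t ∂(ν ε) :=
      integral_const_mul _ _
    rw [e1, e2, e3] at *
    linarith
  -- remainder bounds
  have hRnn : ∀ ε, 0 < ε → 0 ≤ ∫ t, R ε t ∂(ν ε) := by
    intro ε hε
    refine integral_nonneg_of_ae ?_
    filter_upwards [hae ε] with t ht
    have := aux_lb (q ε * lam * t)
    simp only [hR, Pi.zero_apply]; linarith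
  have hRub : ∀ ε, 0 < ε → ∫ t, R ε t ∂(ν ε)
      ≤ (q ε)^2 * lam^2 / 2 * ∫ t, t ^ 2 ∂(ν ε) := by
    intro ε hε
    have hb : ∀ᵐ t ∂(ν ε), R ε t ≤ (q ε)^2 * lam^2 / 2 * t ^ 2 := by
      filter_upwards [hae ε] with t ht
      have hx : 0 ≤ q ε * lam * t :=
        mul_nonneg (mul_nonneg (hq ε hε).le hlam) ht.le
      have := aux_ub (q ε * lam * t) hx
      simp only [hR]; nlinarith
    calc ∫ t, R ε t ∂(ν ε) ≤ ∫ t, (q ε)^2 * lam^2 / 2 * t ^ 2 ∂(ν ε) :=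
          integral_mono_ae (hRint ε hε) ((hm2 ε).const_mul _) hb
      _ = (q ε)^2 * lam^2 / 2 * ∫ t, t ^ 2 ∂(ν ε) := integral_const_mul _ _
  -- the remainder term tends to 0
  have hmem : ∀ᶠ ε in nhdsWithin (0:ℝ) (Set.Ioi 0), (0:ℝ) < ε :=
    eventually_mem_nhdsWithin
  have hto0 : Tendsto (fun ε : ℝ => ε⁻¹ * ∫ t, R ε t ∂(ν ε))
      (nhdsWithin 0 (Set.Ioi 0)) (nhds 0) := by
    have hG : Tendsto (fun ε : ℝ => lam^2 / 2 * (ε⁻¹ * q ε ^ 2 * ∫ t, t ^ 2 ∂(ν ε)))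
        (nhdsWithin 0 (Set.Ioi 0)) (nhds 0) := by
      simpa using hsecond.const_mul (lam^2/2)
    refine squeeze_zero' ?_ ?_ hG
    · filter_upwards [hmem] with ε hε
      exact mul_nonneg (inv_nonneg.mpr hε.le) (hRnn ε hε)
    · filter_upwards [hmem] with ε hε
      have := mul_le_mul_of_nonneg_left (hRub ε hε) (inv_nonneg.mpr hε.le)
      calc ε⁻¹ * ∫ t, R ε t ∂(ν ε)
          ≤ ε⁻¹ * ((q ε)^2 * lam^2 / 2 * ∫ t, t ^ 2 ∂(ν ε)) := this
        _ = lam^2 / 2 * (ε⁻¹ * q ε ^ 2 * ∫ t, t ^ 2 ∂(ν ε)) := by ring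
  -- assemble
  have hmain : Tendsto (fun ε : ℝ =>
      lam * (ε⁻¹ * q ε * ∫ t, t ∂(ν ε)) - ε⁻¹ * ∫ t, R ε t ∂(ν ε))
      (nhdsWithin 0 (Set.Ioi 0)) (nhds lam) := by
    have := (hmean.const_mul lam).sub hto0
    simpa using this
  refine hmain.congr' ?_
  filter_upwards [hmem] with ε hε
  rw [hident ε hε]; ring
end

section
/- Define χ(ε,g) = (1 + √(1 - e^{-2ε}(1 - g²))) / (e^{-ε}(1 + g)) for ε > 0 and g ∈ (0,1). If (ε_n) and (g_n) are sequences in (0,1) with ε_n → 0, g_n → 0 and ε_n/g_n² → 0, then lim_{n→∞} (χ(ε_n, g_n) - 1) · g_n / ε_n = 1. -/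
open Filter Real

/-- The asymptotic `χ - 1 ~ ε/g` in the regime `ε ≪ g² ≪ 1` for the larger
root `χ(ε,g) = (1 + √(1 - e^{-2ε}(1-g²)))/(e^{-ε}(1+g))` of
`s p λ² - λ + s(1-p) = 0`, with `s = e^{-ε}` and `p = (1+g)/2`. -/
theorem stmt_14 (χ : ℝ → ℝ → ℝ)
    (hχ : ∀ ε g : ℝ, χ ε g =
      (1 + Real.sqrt (1 - Real.exp (-2 * ε) * (1 - g ^ 2))) /
        (Real.exp (-ε) * (1 + g)))
    (ε g : ℕ → ℝ)
    (hε : ∀ n, ε n ∈ Set.Ioo (0:ℝ) 1) (hg : ∀ n, g n ∈ Set.Ioo (0:ℝ) 1)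
    (hε0 : Tendsto ε atTop (nhds 0)) (hg0 : Tendsto g atTop (nhds 0))
    (hratio : Tendsto (fun n => ε n / g n ^ 2) atTop (nhds 0)) :
    Tendsto (fun n => (χ (ε n) (g n) - 1) * g n / ε n) atTop (nhds 1) := by
  have hεpos : ∀ n, 0 < ε n := fun n => (hε n).1
  have hgpos : ∀ n, 0 < g n := fun n => (hg n).1
  have hg1 : ∀ n, g n < 1 := fun n => (hg n).2
  set s : ℕ → ℝ := fun n => Real.exp (-ε n) with hs
  have hspos : ∀ n, 0 < s n := fun n => Real.exp_pos _
  have hslt : ∀ n, s n < 1 := fun n => by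
    rw [hs]; simp only; rw [Real.exp_lt_one_iff]; linarith [hεpos n]
  have hs2 : ∀ n, Real.exp (-2 * ε n) = s n ^ 2 := fun n => by
    rw [show -2 * ε n = -ε n + -ε n by ring, Real.exp_add, hs]; ring
  have hDpos : ∀ n, 0 < 1 - s n ^ 2 * (1 - g n ^ 2) := fun n => by
    nlinarith [hspos n, hslt n, hgpos n, hg1 n]
  set a : ℕ → ℝ := fun n => Real.sqrt (1 - s n ^ 2 * (1 - g n ^ 2)) with ha
  have hapos : ∀ n, 0 < a n := fun n => Real.sqrt_pos.mpr (hDpos n)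
  have ha2 : ∀ n, a n ^ 2 = 1 - s n ^ 2 * (1 - g n ^ 2) := fun n =>
    Real.sq_sqrt (hDpos n).le
  -- limit of s
  have hslim : Tendsto s atTop (nhds 1) := by
    have h0 : Tendsto (fun n => -ε n) atTop (nhds 0) := by simpa using hε0.neg
    have := (Real.continuous_exp.tendsto 0).comp h0
    simpa [hs, Function.comp_def] using this
  -- slope limit for exp
  have hslope : Tendsto (fun x => (Real.exp x - 1)/x) (nhdsWithin (0:ℝ) {0}ᶜ) (nhds 1) := by
    have hud : HasDerivAt Real.exp 1 0 := by simpa using Real.hasDerivAt_exp 0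
    have := hasDerivAt_iff_tendsto_slope.mp hud
    simpa [slope_fun_def, Real.exp_zero, div_eq_inv_mul] using this
  have hmem : Tendsto (fun n => -ε n) atTop (nhdsWithin (0:ℝ) {0}ᶜ) := by
    apply tendsto_nhdsWithin_of_tendsto_nhds_of_eventually_within
    · simpa using hε0.neg
    · filter_upwards with n
      simp only [Set.mem_compl_iff, Set.mem_singleton_iff]
      exact neg_ne_zero.mpr (hεpos n).ne'
  have hu : Tendsto (fun n => (1 - s n) / ε n) atTop (nhds 1) := by
    have h1 := hslope.comp hmem
    refine h1.congr fun n => ?_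
    show (Real.exp (-ε n) - 1) / (-ε n) = (1 - s n) / ε n
    rw [hs]; rw [← neg_sub (1:ℝ), neg_div_neg_eq]
  have hv : Tendsto (fun n => (1 - s n ^ 2) / ε n) atTop (nhds 2) := by
    have h1 : Tendsto (fun n => (1 - s n) / ε n * (1 + s n)) atTop (nhds (1 * (1 + 1))) :=
      hu.mul (tendsto_const_nhds.add hslim)
    have h2 : (1 * (1 + 1) : ℝ) = 2 := by norm_num
    rw [h2] at h1
    exact h1.congr fun n => by ring
  -- limit of a/g
  have hr : Tendsto (fun n => a n / g n) atTop (nhds 1) := by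
    have hinner : Tendsto (fun n => (1 - s n ^ 2) / ε n * (ε n / g n ^ 2) + s n ^ 2)
        atTop (nhds 1) := by
      have := (hv.mul hratio).add (hslim.mul hslim)
      norm_num at this
      convert this using 2
      ring
    have := (Real.continuous_sqrt.tendsto 1).comp hinner
    rw [Real.sqrt_one] at this
    refine this.congr fun n => ?_
    show Real.sqrt ((1 - s n ^ 2) / ε n * (ε n / g n ^ 2) + s n ^ 2) = a n / g n
    have he := (hεpos n).ne'
    have hgn := (hgpos n).ne'
    have : (1 - s n ^ 2) / ε n * (ε n / g n ^ 2) + s n ^ 2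
        = (1 - s n ^ 2 * (1 - g n ^ 2)) / g n ^ 2 := by field_simp; ring
    rw [this, ha, Real.sqrt_div (hDpos n).le, Real.sqrt_sq (hgpos n).le]
  -- combine
  have hF : Tendsto (fun n => ((1 - s n) / ε n * g n
      + (1 - s n ^ 2) / ε n * (a n / g n + s n)⁻¹) / (s n * (1 + g n)))
      atTop (nhds 1) := by
    have hnum : Tendsto (fun n => (1 - s n) / ε n * g n
        + (1 - s n ^ 2) / ε n * (a n / g n + s n)⁻¹) atTop (nhds (1*0 + 2*(1+1:ℝ)⁻¹)) :=
      (hu.mul hg0).add (hv.mul ((hr.add hslim).inv₀ (by norm_num)))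
    have hden : Tendsto (fun n => s n * (1 + g n)) atTop (nhds (1*(1+0:ℝ))) :=
      hslim.mul (tendsto_const_nhds.add hg0)
    have := hnum.div hden (by norm_num)
    norm_num at this
    exact this
  refine hF.congr fun n => ?_
  rw [hχ, hs2 n]
  have he := (hεpos n).ne'
  have hgn := (hgpos n).ne'
  have hsn := (hspos n).ne'
  have h1g : (1 : ℝ) + g n ≠ 0 := by linarith [hgpos n]
  have hasg : a n + s n * g n ≠ 0 :=
    (add_pos (hapos n) (mul_pos (hspos n) (hgpos n))).ne'
  have hrs : a n / g n + s n ≠ 0 :=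
    (add_pos (div_pos (hapos n) (hgpos n)) (hspos n)).ne'
  have key : (a n + s n * g n) * (a n - s n * g n) = 1 - s n ^ 2 := by
    have := ha2 n; nlinarith [this]
  show ((1 - s n) / ε n * g n + (1 - s n ^ 2) / ε n * (a n / g n + s n)⁻¹)
      / (s n * (1 + g n))
    = ((1 + a n) / (s n * (1 + g n)) - 1) * g n / ε n
  have e1 : (a n / g n + s n)⁻¹ = g n / (a n + s n * g n) := by
    rw [show a n / g n + s n = (a n + s n * g n) / g n by field_simp, inv_div]
  have e2 : (1 - s n ^ 2) / ε n * (a n / g n + s n)⁻¹ = g n * (a n - s n * g n) / ε n := by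
    rw [e1, ← key]; field_simp
  rw [e2]
  field_simp
  ring
end
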